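/- arXiv:hep-th/9710202 — 9 statements merged into one kernel-verified Lean document; each statement's English description precedes it below -/
import Mathlib

section
/- Every symmetric unitary complex n×n matrix S (i.e., Sᵀ = S and S* S = I_n) can be written as S = W Wᵀ for some unitary n×n complex matrix W. -/
open Matrix
open scoped Matrix.Norms.L2Operator

noncomputable local instance (n : ℕ) : CStarAlgebra (Matrix (Fin n) (Fin n) ℂ) := { }

private lemma transpose_aeval {n : ℕ} (S : Matrix (Fin n) (Fin n) ℂ)
    (p : Polynomial ℂ) : (Polynomial.aeval S p)ᵀ = Polynomial.aeval Sᵀ p := by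
  induction p using Polynomial.induction_on' with
  | add q r hq hr => simp [hq, hr]
  | monomial k c =>
      simp [Polynomial.aeval_monomial, Algebra.algebraMap_eq_smul_one, smul_mul_assoc,
        Matrix.transpose_smul, Matrix.transpose_pow]

/-- Takagi factorization for symmetric unitary matrices: every symmetric
unitary complex matrix `S` factors as `S = W * Wᵀ` with `W` unitary. -/
theorem stmt_1 (n : ℕ) (S : Matrix (Fin n) (Fin n) ℂ)
    (hsym : Sᵀ = S) (hunit : Sᴴ * S = 1) :
    ∃ W : Matrix (Fin n) (Fin n) ℂ, Wᴴ * W = 1 ∧ S = W * Wᵀ := by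
  -- `S` is unitary
  have hstar : star S * S = 1 := hunit
  have hstar' : S * star S = 1 := mul_eq_one_comm.mp hstar
  have hmem : S ∈ unitary (Matrix (Fin n) (Fin n) ℂ) := ⟨hstar, hstar'⟩
  have hnormal : IsStarNormal S := ⟨by rw [Commute, SemiconjBy, hstar, hstar']⟩
  -- the spectrum lies on the unit circle and is finite
  have hsp : spectrum ℂ S ⊆ Metric.sphere (0 : ℂ) 1 :=
    spectrum.subset_circle_of_unitary hmem
  have hfin : (spectrum ℂ S).Finite := Matrix.finite_spectrum S
  have habs : ∀ z ∈ spectrum ℂ S, ‖z‖ = 1 := by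
    intro z hz
    have := hsp hz
    simpa [Complex.dist_eq] using this
  have hne : ∀ z ∈ spectrum ℂ S, z ≠ 0 := by
    intro z hz h0
    simpa [h0] using habs z hz
  -- the pointwise square root on the spectrum
  set f : ℂ → ℂ := fun z => Complex.exp (Complex.log z / 2) with hf
  have hfc : ContinuousOn f (spectrum ℂ S) := hfin.continuousOn f
  set W : Matrix (Fin n) (Fin n) ℂ := cfc f S with hW
  -- W * W = S
  have hWW : W * W = S := by
    rw [hW, ← cfc_mul f f S hfc hfc]
    refine (cfc_congr (g := id) fun z hz => ?_).trans (cfc_id ℂ S)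
    simp only [hf, id_eq, ← Complex.exp_add]
    rw [add_halves, Complex.exp_log (hne z hz)]
  -- W is unitary
  have hWu : star W * W = 1 := by
    rw [hW, ← cfc_star f S, ← cfc_mul _ f S (hfin.continuousOn _) hfc]
    rw [show (1 : Matrix (Fin n) (Fin n) ℂ) = cfc (fun _ : ℂ => (1 : ℂ)) S from
      (cfc_const_one ℂ S).symm]
    apply cfc_congr
    intro z hz
    have hre : (Complex.log z).re = 0 := by
      rw [Complex.log_re, habs z hz, Real.log_one]
    simp only [hf, Complex.star_def, ← Complex.exp_conj, ← Complex.exp_add]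
    rw [map_div₀, Complex.conj_ofNat, ← add_div, add_comm, Complex.add_conj, hre]
    norm_num
  -- W is symmetric: it is a polynomial in S
  have hWT : Wᵀ = W := by
    obtain ⟨p, hp⟩ : ∃ p : Polynomial ℂ, ∀ z ∈ spectrum ℂ S, p.eval z = f z := by
      refine ⟨Lagrange.interpolate hfin.toFinset id f, fun z hz => ?_⟩
      exact Lagrange.eval_interpolate_at_node f (Set.injOn_id _)
        (hfin.mem_toFinset.mpr hz)
    have hWp : W = Polynomial.aeval S p := by
      rw [hW, ← cfc_polynomial p S]
      exact cfc_congr fun z hz => (hp z hz).symm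
    rw [hWp, transpose_aeval, hsym]
  exact ⟨W, hWu, by rw [hWT, hWW]⟩
end

section
/- Let p ≥ 1 and n ≥ 1, and let N_1, …, N_p be n×n real matrices that are pairwise anticommuting (N_i N_j = − N_j N_i for all i ≠ j) and satisfy N_i² = I_n for all i. Then n is divisible by 2^⌊p/2⌋. (Any matrix representation of a rank-p Clifford algebra with identity is built from blocks of dimension 2^ν, where p = 2ν or p = 2ν+1.) -/
open Matrix

set_option maxHeartbeats 1000000
set_option synthInstance.maxHeartbeats 400000

section Helpers

variable {R : Type*} [Ring R]

/-- If `a` anticommutes with `b` and both are involutions, `(a*b)² = -1`. -/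
lemma prod_sq_eq_neg_one {a b : R} (h : a * b = -(b * a)) (ha : a * a = 1)
    (hb : b * b = 1) : (a * b) * (a * b) = -1 := by
  have hba : b * a = -(a * b) := by rw [h, neg_neg]
  have h1 : a * b * (a * b) = a * (b * a) * b := by noncomm_ring
  rw [h1, hba, mul_neg, neg_mul, show a * (a * b) * b = (a * a) * (b * b) by noncomm_ring,
    ha, hb, one_mul]

/-- If `a` anticommutes with both `b` and `c`, and `a² = 1`, then `(a*b)(a*c) = -(b*c)`. -/
lemma prod_mul_prod {a b c : R} (hb : a * b = -(b * a)) (hc : a * c = -(c * a))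
    (ha : a * a = 1) : (a * b) * (a * c) = -(b * c) := by
  have hba : b * a = -(a * b) := by rw [hb, neg_neg]
  have h1 : (a * b) * (a * c) = a * (b * a) * c := by noncomm_ring
  rw [h1, hba, mul_neg, neg_mul, show a * (a * b) * c = (a * a) * (b * c) by noncomm_ring,
    ha, one_mul]

end Helpers

/-- Restriction commutes with composition. -/
lemma restrict_comp' {R M : Type*} [CommRing R] [AddCommGroup M] [Module R M]
    {V : Submodule R M} {f g : M →ₗ[R] M} (hf : ∀ x ∈ V, f x ∈ V) (hg : ∀ x ∈ V, g x ∈ V)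
    (hfg : ∀ x ∈ V, (f ∘ₗ g) x ∈ V) :
    (f ∘ₗ g).restrict hfg = (f.restrict hf) ∘ₗ (g.restrict hg) := by
  ext x
  simp [LinearMap.restrict_apply]

/-- The complex version: pairwise anticommuting complex involutions force `2 ^ (p/2) ∣ n`. -/
lemma aux_complex : ∀ p : ℕ, ∀ n : ℕ, ∀ N : Fin p → Matrix (Fin n) (Fin n) ℂ,
    (∀ i j, i ≠ j → N i * N j = - (N j * N i)) →
    (∀ i, N i * N i = 1) → 2 ^ (p / 2) ∣ n := by
  intro p
  induction p using Nat.strong_induction_on with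
  | _ p IH =>
  match p with
  | 0 => intro n N _ _; simpa using one_dvd n
  | 1 => intro n N _ _; simpa using one_dvd n
  | (q + 2) =>
    intro n N hanti hinv
    set A := N 0 with hA
    set B := N 1 with hB
    have h01 : (0 : Fin (q+2)) ≠ 1 := by simp [Fin.ext_iff]
    have hAB : A * B = -(B * A) := hanti 0 1 h01
    have hA2 : A * A = 1 := hinv 0
    have hB2 : B * B = 1 := hinv 1
    -- trace of A is zero
    have htrA : A.trace = 0 := by
      have h0 : A * B * B = A := by rw [mul_assoc, hB2, mul_one]
      have h4 : B * (A * B) = -A := by rw [hAB, mul_neg, ← mul_assoc, hB2, one_mul]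
      have h5 : A.trace = -A.trace := by
        conv_lhs => rw [← h0]
        rw [Matrix.trace_mul_comm, h4, Matrix.trace_neg]
      have h6 : (2:ℂ) * A.trace = 0 := by linear_combination h5
      simpa using h6
    -- the projection onto the +1 eigenspace of A
    set P : Matrix (Fin n) (Fin n) ℂ := (2⁻¹ : ℂ) • (1 + A) with hP
    have hPP : P * P = P := by
      rw [hP, Matrix.smul_mul, Matrix.mul_smul, smul_smul, add_mul, mul_add, mul_add, hA2]
      rw [show (1:Matrix (Fin n) (Fin n) ℂ) * 1 + 1 * A + (A * 1 + 1) = (2:ℂ) • (1 + A) by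
        simp [two_smul]; abel]
      rw [smul_smul]
      norm_num
    have htrP : P.trace = (n : ℂ) / 2 := by
      simp [hP, Matrix.trace_smul, Matrix.trace_add, htrA, Matrix.trace_one]
      ring
    set π := Matrix.toLin' P with hπ
    have hππ : π ∘ₗ π = π := by rw [hπ, ← Matrix.toLin'_mul, hPP]
    set V := LinearMap.range π with hV
    have hproj : LinearMap.IsProj V π := by
      constructor
      · intro x; exact ⟨x, rfl⟩
      · rintro x ⟨y, rfl⟩
        simpa using LinearMap.congr_fun hππ y
    have htr : LinearMap.trace ℂ _ π = (Module.finrank ℂ V : ℂ) := hproj.trace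
    have htr2 : LinearMap.trace ℂ _ π = P.trace := by
      rw [LinearMap.trace_eq_matrix_trace ℂ (Pi.basisFun ℂ (Fin n)),
        LinearMap.toMatrix_eq_toMatrix', hπ, LinearMap.toMatrix'_toLin']
    set d := Module.finrank ℂ V with hd
    have hn2 : n = 2 * d := by
      have hn2' : (n : ℂ) = 2 * (d : ℂ) := by
        rw [htr2, htrP] at htr
        linear_combination 2 * htr
      exact_mod_cast hn2'
    -- the reduced family
    set M : Fin q → Matrix (Fin n) (Fin n) ℂ :=
      fun i => Complex.I • (B * N i.succ.succ) with hM
    have hk0 : ∀ i : Fin q, i.succ.succ ≠ (0 : Fin (q+2)) := by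
      intro i; simp [Fin.ext_iff]
    have hk1 : ∀ i : Fin q, i.succ.succ ≠ (1 : Fin (q+2)) := by
      intro i; simp [Fin.ext_iff]
    have hkinj : ∀ i j : Fin q, i ≠ j → i.succ.succ ≠ j.succ.succ := by
      intro i j hij h
      exact hij (Fin.succ_injective _ (Fin.succ_injective _ h))
    -- the unscaled matrices X i = B * N (i+2)
    have hXA : ∀ i : Fin q, (B * N i.succ.succ) * A = A * (B * N i.succ.succ) := by
      intro i
      rw [mul_assoc, hanti i.succ.succ 0 (hk0 i), mul_neg, ← mul_assoc, ← neg_mul, ← hAB,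
        mul_assoc]
    have hXX : ∀ i : Fin q, (B * N i.succ.succ) * (B * N i.succ.succ) = -1 := fun i =>
      prod_sq_eq_neg_one (hanti 1 i.succ.succ (Ne.symm (hk1 i))) hB2 (hinv _)
    have hXanti : ∀ i j : Fin q, i ≠ j →
        (B * N i.succ.succ) * (B * N j.succ.succ)
          = -((B * N j.succ.succ) * (B * N i.succ.succ)) := by
      intro i j hij
      rw [prod_mul_prod (hanti 1 i.succ.succ (Ne.symm (hk1 i)))
          (hanti 1 j.succ.succ (Ne.symm (hk1 j))) hB2,
        prod_mul_prod (hanti 1 j.succ.succ (Ne.symm (hk1 j)))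
          (hanti 1 i.succ.succ (Ne.symm (hk1 i))) hB2,
        hanti i.succ.succ j.succ.succ (hkinj i j hij)]
    -- properties of M
    have hMsq : ∀ i, M i * M i = 1 := by
      intro i
      rw [hM]
      simp only [Matrix.smul_mul, Matrix.mul_smul, smul_smul, Complex.I_mul_I, hXX]
      try simp
    have hManti : ∀ i j, i ≠ j → M i * M j = -(M j * M i) := by
      intro i j hij
      rw [hM]
      simp only [Matrix.smul_mul, Matrix.mul_smul, smul_smul, Complex.I_mul_I,
        hXanti i j hij]
      try simp
    have hMP : ∀ i, M i * P = P * M i := by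
      intro i
      rw [hM]
      simp only [Matrix.smul_mul, Matrix.mul_smul]
      congr 1
      rw [hP]
      simp only [Matrix.smul_mul, Matrix.mul_smul]
      congr 1
      rw [mul_add, add_mul, mul_one, one_mul, hXA]
    -- restrict to V
    have hmem : ∀ i : Fin q, ∀ x ∈ V, Matrix.toLin' (M i) x ∈ V := by
      rintro i x ⟨y, rfl⟩
      refine ⟨Matrix.toLin' (M i) y, ?_⟩
      rw [hπ, ← Matrix.toLin'_mul_apply, ← hMP, Matrix.toLin'_mul_apply]
    set S : Fin q → (V →ₗ[ℂ] V) := fun i => (Matrix.toLin' (M i)).restrict (hmem i) with hS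
    have hSmul : ∀ i j : Fin q, ∀ x : V,
        ((S i * S j) x : Fin n → ℂ) = Matrix.toLin' (M i * M j) (x : Fin n → ℂ) := by
      intro i j x
      rw [Matrix.toLin'_mul]
      simp [hS, Module.End.mul_apply, LinearMap.restrict_apply]
    have hSsq : ∀ i, S i * S i = 1 := by
      intro i
      refine LinearMap.ext fun x => Subtype.ext ?_
      have h1 := hSmul i i x
      rw [hMsq i, Matrix.toLin'_one] at h1
      simpa using h1
    have hSanti : ∀ i j, i ≠ j → S i * S j = -(S j * S i) := by
      intro i j hij
      refine LinearMap.ext fun x => Subtype.ext ?_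
      have h1 := hSmul i j x
      have h2 := hSmul j i x
      simp only [LinearMap.neg_apply, NegMemClass.coe_neg]
      rw [h1, h2, hManti i j hij, map_neg, LinearMap.neg_apply]
    -- transport to matrices over the eigenspace
    set b := Module.finBasis ℂ V with hb
    set e := LinearMap.toMatrixAlgEquiv b with he
    set Q : Fin q → Matrix (Fin d) (Fin d) ℂ := fun i => e (S i) with hQ
    have hQanti : ∀ i j, i ≠ j → Q i * Q j = -(Q j * Q i) := fun i j hij => by
      rw [hQ]
      simp only
      have h' : S i * S j + S j * S i = 0 := by
        rw [hSanti i j hij]; exact neg_add_cancel (S j * S i)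
      have h2 := congrArg e h'
      rw [map_add, _root_.map_mul, _root_.map_mul, map_zero] at h2
      exact eq_neg_of_add_eq_zero_left h2
    have hQsq : ∀ i, Q i * Q i = 1 := fun i => by
      rw [hQ]
      simp only
      rw [← _root_.map_mul, hSsq i, _root_.map_one]
    obtain ⟨c, hc⟩ := IH q (by omega) d Q hQanti hQsq
    refine ⟨c, ?_⟩
    rw [hn2, hc, show (q+2)/2 = q/2 + 1 by omega]
    ring

/-- If `N₁, …, N_p` are pairwise anticommuting real `n × n` involutions, then
`n` is divisible by `2 ^ ⌊p/2⌋`. -/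
theorem stmt_2 (p n : ℕ) (hp : 1 ≤ p) (hn : 1 ≤ n)
    (N : Fin p → Matrix (Fin n) (Fin n) ℝ)
    (hanti : ∀ i j, i ≠ j → N i * N j = - (N j * N i))
    (hinv : ∀ i, N i * N i = 1) :
    2 ^ (p / 2) ∣ n := by
  have hmapneg : ∀ X : Matrix (Fin n) (Fin n) ℝ,
      (-X).map ⇑Complex.ofRealHom = -(X.map ⇑Complex.ofRealHom) := by
    intro X; ext a b; simp
  apply aux_complex p n (fun i => (N i).map Complex.ofRealHom)
  · intro i j hij
    show (N i).map _ * (N j).map _ = -((N j).map _ * (N i).map _)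
    rw [← Matrix.map_mul, ← Matrix.map_mul, hanti i j hij, hmapneg]
  · intro i
    show (N i).map _ * (N i).map _ = 1
    rw [← Matrix.map_mul, hinv i]
    exact Matrix.map_one _ (by simp) (by simp)
end

section
/- For every natural number ν there exist ν + 1 real symmetric 2^ν × 2^ν matrices N_1, …, N_{ν+1} that are pairwise anticommuting (N_i N_j = − N_j N_i for i ≠ j) and satisfy N_i² = I for all i. (A rank-p Clifford algebra, p = 2ν or p = 2ν+1, possesses a 2^ν-dimensional matrix representation containing ν + 1 real, symmetric, pairwise anticommuting elements.) -/
open Matrix Kronecker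

private def pauliX : Matrix (Fin 2) (Fin 2) ℝ := !![0, 1; 1, 0]
private def pauliZ : Matrix (Fin 2) (Fin 2) ℝ := !![1, 0; 0, -1]

private lemma neg_kron {m n : Type*} (A : Matrix m m ℝ) (B : Matrix n n ℝ) :
    (-A) ⊗ₖ B = -(A ⊗ₖ B) := by
  ext ⟨i, j⟩ ⟨k, l⟩; simp [Matrix.kroneckerMap_apply]

private lemma kron_neg {m n : Type*} (A : Matrix m m ℝ) (B : Matrix n n ℝ) :
    A ⊗ₖ (-B) = -(A ⊗ₖ B) := by
  ext ⟨i, j⟩ ⟨k, l⟩; simp [Matrix.kroneckerMap_apply]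

private lemma pauliX_sq : pauliX * pauliX = 1 := by
  simp [pauliX, Matrix.mul_fin_two, Matrix.one_fin_two]

private lemma pauliZ_sq : pauliZ * pauliZ = 1 := by
  simp [pauliZ, Matrix.mul_fin_two, Matrix.one_fin_two]

private lemma pauliXZ : pauliX * pauliZ = -(pauliZ * pauliX) := by
  simp [pauliX, pauliZ, Matrix.mul_fin_two]

private lemma pauliX_symm : pauliXᵀ = pauliX := by
  ext i j; fin_cases i <;> fin_cases j <;> simp [pauliX]

private lemma pauliZ_symm : pauliZᵀ = pauliZ := by
  ext i j; fin_cases i <;> fin_cases j <;> simp [pauliZ]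

/-- For every `ν` there exist `ν + 1` real symmetric `2^ν × 2^ν` matrices that
are pairwise anticommuting involutions. -/
theorem stmt_3 (ν : ℕ) :
    ∃ N : Fin (ν + 1) → Matrix (Fin (2 ^ ν)) (Fin (2 ^ ν)) ℝ,
      (∀ i, (N i)ᵀ = N i) ∧
      (∀ i, N i * N i = 1) ∧
      (∀ i j, i ≠ j → N i * N j = - (N j * N i)) := by
  induction ν with
  | zero =>
    refine ⟨fun _ => 1, fun i => Matrix.transpose_one, fun i => one_mul 1,
      fun i j h => absurd (Fin.ext (by omega)) h⟩
  | succ ν ih =>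
    obtain ⟨N, hsym, hsq, hanti⟩ := ih
    -- reindexing equivalence
    have hcard : 2 ^ ν * 2 = 2 ^ (ν + 1) := (pow_succ 2 ν).symm
    let e : Fin (2 ^ ν) × Fin 2 ≃ Fin (2 ^ (ν + 1)) :=
      finProdFinEquiv.trans (finCongr hcard)
    let r : Matrix (Fin (2 ^ ν) × Fin 2) (Fin (2 ^ ν) × Fin 2) ℝ
        ≃ₐ[ℝ] Matrix (Fin (2 ^ (ν + 1))) (Fin (2 ^ (ν + 1))) ℝ :=
      Matrix.reindexAlgEquiv ℝ ℝ e
    have hr_t : ∀ M : Matrix (Fin (2 ^ ν) × Fin 2) (Fin (2 ^ ν) × Fin 2) ℝ,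
        (r M)ᵀ = r Mᵀ := by
      intro M
      simp [r, Matrix.reindexAlgEquiv_apply, Matrix.reindex_apply,
        Matrix.transpose_submatrix]
    refine ⟨fun i => Fin.lastCases (r (1 ⊗ₖ pauliZ)) (fun j => r (N j ⊗ₖ pauliX)) i,
      ?_, ?_, ?_⟩
    · intro i
      induction i using Fin.lastCases with
      | last =>
        simp only [Fin.lastCases_last]
        rw [hr_t, ← Matrix.kroneckerMap_transpose, Matrix.transpose_one, pauliZ_symm]
      | cast j =>
        simp only [Fin.lastCases_castSucc]
        rw [hr_t, ← Matrix.kroneckerMap_transpose, hsym, pauliX_symm]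
    · intro i
      induction i using Fin.lastCases with
      | last =>
        simp only [Fin.lastCases_last]
        rw [← _root_.map_mul, ← Matrix.mul_kronecker_mul, one_mul, pauliZ_sq,
          Matrix.one_kronecker_one, _root_.map_one]
      | cast j =>
        simp only [Fin.lastCases_castSucc]
        rw [← _root_.map_mul, ← Matrix.mul_kronecker_mul, hsq, pauliX_sq,
          Matrix.one_kronecker_one, _root_.map_one]
    · intro i j hij
      induction i using Fin.lastCases with
      | last =>
        induction j using Fin.lastCases with
        | last => exact absurd rfl hij
        | cast j' =>
          simp only [Fin.lastCases_last, Fin.lastCases_castSucc]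
          rw [← _root_.map_mul, ← _root_.map_mul, ← Matrix.mul_kronecker_mul,
            ← Matrix.mul_kronecker_mul, one_mul, mul_one, ← neg_neg (pauliZ * pauliX),
            ← pauliXZ, kron_neg, _root_.map_neg]
      | cast i' =>
        induction j using Fin.lastCases with
        | last =>
          simp only [Fin.lastCases_last, Fin.lastCases_castSucc]
          rw [← _root_.map_mul, ← _root_.map_mul, ← Matrix.mul_kronecker_mul,
            ← Matrix.mul_kronecker_mul, one_mul, mul_one, pauliXZ, kron_neg, _root_.map_neg]
        | cast j' =>
          have hne : i' ≠ j' := fun h => hij (by rw [h])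
          simp only [Fin.lastCases_castSucc]
          rw [← _root_.map_mul, ← _root_.map_mul, ← Matrix.mul_kronecker_mul,
            ← Matrix.mul_kronecker_mul, hanti i' j' hne, neg_kron, _root_.map_neg]
end

section
/- There do not exist four 4×4 real symmetric matrices N_1, N_2, N_3, N_4 that are pairwise anticommuting (N_i N_j = − N_j N_i for i ≠ j) and satisfy N_i² = I_4 for all i. (A Clifford algebra represented on 4-dimensional blocks admits at most 3 real, symmetric, pairwise anticommuting elements.) -/
open Matrix

/-- There do not exist four real symmetric `4 × 4` matrices that are pairwise
anticommuting involutions. -/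
theorem stmt_5 :
    ¬ ∃ N : Fin 4 → Matrix (Fin 4) (Fin 4) ℝ,
      (∀ i, (N i)ᵀ = N i) ∧
      (∀ i, N i * N i = 1) ∧
      (∀ i j, i ≠ j → N i * N j = - (N j * N i)) := by
  rintro ⟨N, hsym, hinv, hanti⟩
  have hswap : ∀ i j, i ≠ j → ∀ X : Matrix (Fin 4) (Fin 4) ℝ,
      N i * (N j * X) = -(N j * (N i * X)) := by
    intro i j hij X
    rw [← mul_assoc, hanti i j hij, neg_mul, mul_assoc]
  have hsq : ∀ i, ∀ X : Matrix (Fin 4) (Fin 4) ℝ, N i * (N i * X) = X := by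
    intro i X
    rw [← mul_assoc, hinv, one_mul]
  have Ldot : ∀ (A C : Matrix (Fin 4) (Fin 4) ℝ) (x y : Fin 4 → ℝ),
      (A *ᵥ x) ⬝ᵥ (C *ᵥ y) = x ⬝ᵥ (Aᵀ * C) *ᵥ y := by
    intro A C x y
    rw [Matrix.dotProduct_mulVec, Matrix.dotProduct_mulVec, Matrix.vecMul_mulVec]
  have skew0 : ∀ (S : Matrix (Fin 4) (Fin 4) ℝ), Sᵀ = -S → ∀ x : Fin 4 → ℝ,
      x ⬝ᵥ S *ᵥ x = 0 := by
    intro S hS x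
    have h1 : x ⬝ᵥ S *ᵥ x = (Sᵀ *ᵥ x) ⬝ᵥ x := by
      rw [Matrix.dotProduct_mulVec, Matrix.mulVec_transpose]
    rw [hS] at h1
    simp only [Matrix.neg_mulVec, neg_dotProduct, dotProduct_neg,
      dotProduct_comm] at h1
    linarith
  have q0 : ∀ (a b : Fin 4), a ≠ b → ∀ x : Fin 4 → ℝ,
      x ⬝ᵥ (N a * N b) *ᵥ x = 0 := by
    intro a b hab x
    refine skew0 _ ?_ x
    rw [Matrix.transpose_mul, hsym, hsym]
    exact hanti b a hab.symm
  set P : Matrix (Fin 4) (Fin 4) ℝ := N 0 * (N 1 * (N 2 * N 3)) with hPdef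
  have key : ∀ v : Fin 4 → ℝ, v ⬝ᵥ v = 1 → (v ⬝ᵥ P *ᵥ v) ^ 2 = 1 := by
    intro v hv
    set B : Matrix (Fin 4) (Fin 4) ℝ := Matrix.of (fun r c => ((N 0 * N c) *ᵥ v) r) with hBdef
    have hBtB : Bᵀ * B = 1 := by
      ext i j
      have e1 : (Bᵀ * B) i j = v ⬝ᵥ ((N 0 * N i)ᵀ * (N 0 * N j)) *ᵥ v := by
        rw [← Ldot]; rfl
      have e2 : (N 0 * N i)ᵀ * (N 0 * N j) = N i * N j := by
        rw [Matrix.transpose_mul, hsym, hsym, mul_assoc, ← mul_assoc (N 0), hinv, one_mul]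
      rw [e1, e2]
      rcases eq_or_ne i j with rfl | hij
      · rw [hinv, Matrix.one_mulVec, hv, Matrix.one_apply_eq]
      · rw [q0 i j hij, Matrix.one_apply_ne hij]
    have hBBt : B * Bᵀ = 1 := mul_eq_one_comm.mp hBtB
    set w : Fin 4 → ℝ := (N 1 * N 2) *ᵥ v with hwdef
    set u : Fin 4 → ℝ := Bᵀ *ᵥ w with hudef
    have hu : ∀ i, u i = v ⬝ᵥ ((N i * N 0) * (N 1 * N 2)) *ᵥ v := by
      intro i
      have e : u i = ((N 0 * N i) *ᵥ v) ⬝ᵥ ((N 1 * N 2) *ᵥ v) := rfl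
      rw [e, Ldot, Matrix.transpose_mul, hsym, hsym]
    have hu0 : u 0 = 0 := by
      rw [hu 0]
      have e : (N 0 * N 0) * (N 1 * N 2) = N 1 * N 2 := by rw [hinv, one_mul]
      rw [e]; exact q0 1 2 (by decide) v
    have hu1 : u 1 = 0 := by
      rw [hu 1]
      have e : (N 1 * N 0) * (N 1 * N 2) = -(N 0 * N 2) := by
        simp only [mul_assoc]
        simp [hswap 1 0 (by decide), hswap 2 0 (by decide), hswap 2 1 (by decide),
          hswap 3 0 (by decide), hswap 3 1 (by decide), hswap 3 2 (by decide),
          hanti 1 0 (by decide), hanti 2 0 (by decide), hanti 2 1 (by decide),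
          hanti 3 0 (by decide), hanti 3 1 (by decide), hanti 3 2 (by decide),
          hsq 0, hsq 1, hsq 2, hsq 3, hinv 0, hinv 1, hinv 2, hinv 3,
          mul_neg, neg_mul, neg_neg]
      rw [e, Matrix.neg_mulVec, dotProduct_neg, q0 0 2 (by decide), neg_zero]
    have hu2 : u 2 = 0 := by
      rw [hu 2]
      have e : (N 2 * N 0) * (N 1 * N 2) = N 0 * N 1 := by
        simp only [mul_assoc]
        simp [hswap 1 0 (by decide), hswap 2 0 (by decide), hswap 2 1 (by decide),
          hswap 3 0 (by decide), hswap 3 1 (by decide), hswap 3 2 (by decide),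
          hanti 1 0 (by decide), hanti 2 0 (by decide), hanti 2 1 (by decide),
          hanti 3 0 (by decide), hanti 3 1 (by decide), hanti 3 2 (by decide),
          hsq 0, hsq 1, hsq 2, hsq 3, hinv 0, hinv 1, hinv 2, hinv 3,
          mul_neg, neg_mul, neg_neg]
      rw [e]; exact q0 0 1 (by decide) v
    have hu3 : u 3 = -(v ⬝ᵥ P *ᵥ v) := by
      rw [hu 3]
      have e : (N 3 * N 0) * (N 1 * N 2) = -P := by
        rw [hPdef]
        simp only [mul_assoc]
        simp [hswap 1 0 (by decide), hswap 2 0 (by decide), hswap 2 1 (by decide),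
          hswap 3 0 (by decide), hswap 3 1 (by decide), hswap 3 2 (by decide),
          hanti 1 0 (by decide), hanti 2 0 (by decide), hanti 2 1 (by decide),
          hanti 3 0 (by decide), hanti 3 1 (by decide), hanti 3 2 (by decide),
          hsq 0, hsq 1, hsq 2, hsq 3, hinv 0, hinv 1, hinv 2, hinv 3,
          mul_neg, neg_mul, neg_neg]
      rw [e, Matrix.neg_mulVec, dotProduct_neg]
    have huu : u ⬝ᵥ u = 1 := by
      have e1 : u ⬝ᵥ u = w ⬝ᵥ ((Bᵀ)ᵀ * Bᵀ) *ᵥ w := Ldot Bᵀ Bᵀ w w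
      rw [Matrix.transpose_transpose, hBBt, Matrix.one_mulVec] at e1
      have e2 : w ⬝ᵥ w = v ⬝ᵥ ((N 1 * N 2)ᵀ * (N 1 * N 2)) *ᵥ v := by
        rw [← Ldot]
      have e3 : (N 1 * N 2)ᵀ * (N 1 * N 2) = 1 := by
        rw [Matrix.transpose_mul, hsym, hsym, mul_assoc, ← mul_assoc (N 1), hinv, one_mul, hinv]
      rw [e1, e2, e3, Matrix.one_mulVec, hv]
    have hfin : u 0 * u 0 + u 1 * u 1 + u 2 * u 2 + u 3 * u 3 = 1 := by
      rw [← huu]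
      simp [dotProduct, Fin.sum_univ_four]
    rw [hu0, hu1, hu2, hu3] at hfin
    nlinarith [hfin]
  have hdiagsq : ∀ i : Fin 4, P i i * P i i = 1 := by
    intro i
    have h1 : (Pi.single i 1 : Fin 4 → ℝ) ⬝ᵥ (Pi.single i 1 : Fin 4 → ℝ) = 1 := by
      simp [dotProduct_single]
    have h2 : (Pi.single i 1 : Fin 4 → ℝ) ⬝ᵥ P *ᵥ (Pi.single i 1 : Fin 4 → ℝ) = P i i := by
      simp [Matrix.mulVec_single, single_dotProduct]
    have h3 := key _ h1
    rw [h2] at h3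
    nlinarith [h3]
  have hPsym : ∀ a b : Fin 4, P b a = P a b := by
    have h : Pᵀ = P := by
      rw [hPdef]
      simp only [Matrix.transpose_mul, hsym]
      simp only [mul_assoc]
      simp [hswap 1 0 (by decide), hswap 2 0 (by decide), hswap 2 1 (by decide),
        hswap 3 0 (by decide), hswap 3 1 (by decide), hswap 3 2 (by decide),
        hanti 1 0 (by decide), hanti 2 0 (by decide), hanti 2 1 (by decide),
        hanti 3 0 (by decide), hanti 3 1 (by decide), hanti 3 2 (by decide),
        hsq 0, hsq 1, hsq 2, hsq 3, hinv 0, hinv 1, hinv 2, hinv 3,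
        mul_neg, neg_mul, neg_neg]
    intro a b
    exact congrFun (congrFun h a) b
  have hPP : P * P = 1 := by
    rw [hPdef]
    simp only [mul_assoc]
    simp [hswap 1 0 (by decide), hswap 2 0 (by decide), hswap 2 1 (by decide),
      hswap 3 0 (by decide), hswap 3 1 (by decide), hswap 3 2 (by decide),
      hanti 1 0 (by decide), hanti 2 0 (by decide), hanti 2 1 (by decide),
      hanti 3 0 (by decide), hanti 3 1 (by decide), hanti 3 2 (by decide),
      hsq 0, hsq 1, hsq 2, hsq 3, hinv 0, hinv 1, hinv 2, hinv 3,
      mul_neg, neg_mul, neg_neg]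
  have hmul : ∀ i : Fin 4,
      P i 0 * P i 0 + P i 1 * P i 1 + P i 2 * P i 2 + P i 3 * P i 3 = 1 := by
    intro i
    have h := congrFun (congrFun hPP i) i
    simp only [Matrix.mul_apply, Fin.sum_univ_four, Matrix.one_apply_eq] at h
    rw [hPsym i 0, hPsym i 1, hPsym i 2, hPsym i 3] at h
    exact h
  have hP01 : P 0 1 = 0 := by
    have hle : P 0 1 * P 0 1 ≤ 0 := by
      linarith [hmul 0, hdiagsq 0, mul_self_nonneg (P 0 2), mul_self_nonneg (P 0 3)]
    exact mul_self_eq_zero.mp (le_antisymm hle (mul_self_nonneg _))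
  have hP02 : P 0 2 = 0 := by
    have hle : P 0 2 * P 0 2 ≤ 0 := by
      linarith [hmul 0, hdiagsq 0, mul_self_nonneg (P 0 1), mul_self_nonneg (P 0 3)]
    exact mul_self_eq_zero.mp (le_antisymm hle (mul_self_nonneg _))
  have hP03 : P 0 3 = 0 := by
    have hle : P 0 3 * P 0 3 ≤ 0 := by
      linarith [hmul 0, hdiagsq 0, mul_self_nonneg (P 0 1), mul_self_nonneg (P 0 2)]
    exact mul_self_eq_zero.mp (le_antisymm hle (mul_self_nonneg _))
  have hP10 : P 1 0 = 0 := by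
    have hle : P 1 0 * P 1 0 ≤ 0 := by
      linarith [hmul 1, hdiagsq 1, mul_self_nonneg (P 1 2), mul_self_nonneg (P 1 3)]
    exact mul_self_eq_zero.mp (le_antisymm hle (mul_self_nonneg _))
  have hP12 : P 1 2 = 0 := by
    have hle : P 1 2 * P 1 2 ≤ 0 := by
      linarith [hmul 1, hdiagsq 1, mul_self_nonneg (P 1 0), mul_self_nonneg (P 1 3)]
    exact mul_self_eq_zero.mp (le_antisymm hle (mul_self_nonneg _))
  have hP13 : P 1 3 = 0 := by
    have hle : P 1 3 * P 1 3 ≤ 0 := by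
      linarith [hmul 1, hdiagsq 1, mul_self_nonneg (P 1 0), mul_self_nonneg (P 1 2)]
    exact mul_self_eq_zero.mp (le_antisymm hle (mul_self_nonneg _))
  have hP20 : P 2 0 = 0 := by
    have hle : P 2 0 * P 2 0 ≤ 0 := by
      linarith [hmul 2, hdiagsq 2, mul_self_nonneg (P 2 1), mul_self_nonneg (P 2 3)]
    exact mul_self_eq_zero.mp (le_antisymm hle (mul_self_nonneg _))
  have hP21 : P 2 1 = 0 := by
    have hle : P 2 1 * P 2 1 ≤ 0 := by
      linarith [hmul 2, hdiagsq 2, mul_self_nonneg (P 2 0), mul_self_nonneg (P 2 3)]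
    exact mul_self_eq_zero.mp (le_antisymm hle (mul_self_nonneg _))
  have hP23 : P 2 3 = 0 := by
    have hle : P 2 3 * P 2 3 ≤ 0 := by
      linarith [hmul 2, hdiagsq 2, mul_self_nonneg (P 2 0), mul_self_nonneg (P 2 1)]
    exact mul_self_eq_zero.mp (le_antisymm hle (mul_self_nonneg _))
  have hP30 : P 3 0 = 0 := by
    have hle : P 3 0 * P 3 0 ≤ 0 := by
      linarith [hmul 3, hdiagsq 3, mul_self_nonneg (P 3 1), mul_self_nonneg (P 3 2)]
    exact mul_self_eq_zero.mp (le_antisymm hle (mul_self_nonneg _))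
  have hP31 : P 3 1 = 0 := by
    have hle : P 3 1 * P 3 1 ≤ 0 := by
      linarith [hmul 3, hdiagsq 3, mul_self_nonneg (P 3 0), mul_self_nonneg (P 3 2)]
    exact mul_self_eq_zero.mp (le_antisymm hle (mul_self_nonneg _))
  have hP32 : P 3 2 = 0 := by
    have hle : P 3 2 * P 3 2 ≤ 0 := by
      linarith [hmul 3, hdiagsq 3, mul_self_nonneg (P 3 0), mul_self_nonneg (P 3 1)]
    exact mul_self_eq_zero.mp (le_antisymm hle (mul_self_nonneg _))
  have htr : P 0 0 + P 1 1 + P 2 2 + P 3 3 = 0 := by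
    have h1 : N 0 * P * N 0 = -P := by
      rw [hPdef]
      simp only [mul_assoc]
      simp [hswap 1 0 (by decide), hswap 2 0 (by decide), hswap 2 1 (by decide),
        hswap 3 0 (by decide), hswap 3 1 (by decide), hswap 3 2 (by decide),
        hanti 1 0 (by decide), hanti 2 0 (by decide), hanti 2 1 (by decide),
        hanti 3 0 (by decide), hanti 3 1 (by decide), hanti 3 2 (by decide),
        hsq 0, hsq 1, hsq 2, hsq 3, hinv 0, hinv 1, hinv 2, hinv 3,
        mul_neg, neg_mul, neg_neg]
    have h2 := congrArg Matrix.trace h1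
    rw [Matrix.trace_mul_cycle, ← mul_assoc, hinv 0, one_mul, Matrix.trace_neg] at h2
    have h3 : Matrix.trace P = 0 := by linarith
    simpa [Matrix.trace, Matrix.diag, Fin.sum_univ_four] using h3
  obtain ⟨i, j, hij, hsum0, hij0, hji0, hdii⟩ :
      ∃ i j : Fin 4, i ≠ j ∧ P i i + P j j = 0 ∧ P i j = 0 ∧ P j i = 0 ∧
        P i i * P i i = 1 := by
    rcases mul_self_eq_one_iff.mp (hdiagsq 0) with h0 | h0 <;>
    rcases mul_self_eq_one_iff.mp (hdiagsq 1) with h1 | h1 <;>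
    rcases mul_self_eq_one_iff.mp (hdiagsq 2) with h2 | h2 <;>
    rcases mul_self_eq_one_iff.mp (hdiagsq 3) with h3 | h3 <;>
      first
        | (refine ⟨0, 1, by decide, ?_, hP01, hP10, hdiagsq 0⟩;
            rw [h0, h1]; norm_num; done)
        | (refine ⟨0, 2, by decide, ?_, hP02, hP20, hdiagsq 0⟩;
            rw [h0, h2]; norm_num; done)
        | (refine ⟨0, 3, by decide, ?_, hP03, hP30, hdiagsq 0⟩;
            rw [h0, h3]; norm_num; done)
        | (refine ⟨1, 2, by decide, ?_, hP12, hP21, hdiagsq 1⟩;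
            rw [h1, h2]; norm_num; done)
        | (refine ⟨1, 3, by decide, ?_, hP13, hP31, hdiagsq 1⟩;
            rw [h1, h3]; norm_num; done)
        | (refine ⟨2, 3, by decide, ?_, hP23, hP32, hdiagsq 2⟩;
            rw [h2, h3]; norm_num; done)
        | (exfalso; rw [h0, h1, h2, h3] at htr; norm_num at htr)
  set v : Fin 4 → ℝ :=
    (3/5 : ℝ) • (Pi.single i 1 : Fin 4 → ℝ) + (4/5 : ℝ) • (Pi.single j 1 : Fin 4 → ℝ) with hvdef
  have hv1 : v ⬝ᵥ v = 1 := by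
    rw [hvdef]
    simp [dotProduct_add, add_dotProduct, dotProduct_smul,
      smul_dotProduct, dotProduct_single, single_dotProduct,
      Pi.single_apply, hij, hij.symm, smul_eq_mul]
    norm_num
  have hval : v ⬝ᵥ P *ᵥ v = (9/25) * P i i + (16/25) * P j j := by
    rw [hvdef]
    simp [Matrix.mulVec_add, Matrix.mulVec_smul, Matrix.mulVec_single,
      dotProduct_add, add_dotProduct, dotProduct_smul,
      smul_dotProduct, dotProduct_single, single_dotProduct,
      hij0, hji0, smul_eq_mul]
    ring
  have hq := key v hv1
  rw [hval] at hq
  have hy : P j j = - P i i := by linarith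
  rw [hy] at hq
  ring_nf at hq
  nlinarith [hdii, hq]
end

section
/- Let n ≥ 1, m ≥ 1, and let Y_1, …, Y_m be n×n complex matrices, each symmetric (Y_αᵀ = Y_α), satisfying the Clifford-type Yukawa relations Y_α* Y_β + Y_β* Y_α = 2 δ_{αβ} I_n for all α, β. If n = 2 then m ≤ 3, and if n = 4 then m ≤ 4. (These are the only two admissible options, (n_ω = 2, m_ω = 3) and (n_ω = 4, m_ω = 4), for the fermionic and bosonic dimensions of an irreducible component of the Yukawa finiteness condition with Clifford-type couplings in these dimensions.) -/
open Matrix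

set_option maxHeartbeats 1000000 in

private lemma aux2 (Y C1 C2 C3 : Matrix (Fin 2) (Fin 2) ℂ)
    (hY : Yᴴ * Y = 1) (hY' : Y * Yᴴ = 1) (hYt : Yᵀ = Y)
    (hs1 : C1 * C1 = -1) (hs2 : C2 * C2 = -1) (hs3 : C3 * C3 = -1)
    (h12 : C1 * C2 = -(C2 * C1)) (h13 : C1 * C3 = -(C3 * C1))
    (h23 : C2 * C3 = -(C3 * C2))
    (ht1 : C1ᵀ = Y * (C1 * Yᴴ)) (ht2 : C2ᵀ = Y * (C2 * Yᴴ))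
    (ht3 : C3ᵀ = Y * (C3 * Yᴴ)) : False := by
  have hYx : ∀ X : Matrix (Fin 2) (Fin 2) ℂ, Yᴴ * (Y * X) = X := fun X => by
    rw [← mul_assoc, hY, one_mul]
  have h21 : C2 * C1 = -(C1 * C2) := by rw [h12, neg_neg]
  have h31 : C3 * C1 = -(C1 * C3) := by rw [h13, neg_neg]
  set A := Y * (C1 * C2) with hA
  set B := Y * (C1 * C3) with hB
  have hskA : Aᵀ = -A := by
    rw [hA, transpose_mul, transpose_mul, ht1, ht2, hYt]
    simp only [mul_assoc, hYx, hY, mul_one]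
    rw [h21, mul_neg]
  have hskB : Bᵀ = -B := by
    rw [hB, transpose_mul, transpose_mul, ht1, ht3, hYt]
    simp only [mul_assoc, hYx, hY, mul_one]
    rw [h31, mul_neg]
  have keyA : ∀ i j : Fin 2, A j i = -(A i j) := fun i j => by
    have := congrFun (congrFun hskA i) j
    simpa [transpose_apply] using this
  have keyB : ∀ i j : Fin 2, B j i = -(B i j) := fun i j => by
    have := congrFun (congrFun hskB i) j
    simpa [transpose_apply] using this
  have hA00 : A 0 0 = 0 := by have := keyA 0 0; linear_combination this / 2
  have hA11 : A 1 1 = 0 := by have := keyA 1 1; linear_combination this / 2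
  have hB00 : B 0 0 = 0 := by have := keyB 0 0; linear_combination this / 2
  have hB11 : B 1 1 = 0 := by have := keyB 1 1; linear_combination this / 2
  set a := A 0 1 with ha
  set b := B 0 1 with hb
  have key : b • A = a • B := by
    ext i j
    fin_cases i <;> fin_cases j
    · show b * A 0 0 = a * B 0 0
      rw [hA00, hB00]; ring
    · show b * A 0 1 = a * B 0 1
      rw [← ha, ← hb]; ring
    · show b * A 1 0 = a * B 1 0
      rw [keyA 0 1, keyB 0 1, ← ha, ← hb]; ring
    · show b * A 1 1 = a * B 1 1
      rw [hA11, hB11]; ring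
  have hc1 : ∀ X : Matrix (Fin 2) (Fin 2) ℂ, (-C1) * (C1 * X) = X := fun X => by
    rw [neg_mul, ← mul_assoc, hs1, neg_one_mul, neg_neg]
  have E2 : b • C2 = a • C3 := by
    have h := congrArg (fun X => (-C1) * (Yᴴ * X)) key
    simpa only [Matrix.mul_smul, hA, hB, hYx, hc1] using h
  have e1 : b • (C2 * C3) = -(a • (1 : Matrix (Fin 2) (Fin 2) ℂ)) := by
    rw [← smul_mul_assoc, E2, smul_mul_assoc, hs3, smul_neg]
  have e2 : b • (C3 * C2) = -(a • (1 : Matrix (Fin 2) (Fin 2) ℂ)) := by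
    rw [← Matrix.mul_smul, E2, Matrix.mul_smul, hs3, smul_neg]
  have e3 : -(a • (1 : Matrix (Fin 2) (Fin 2) ℂ)) = a • (1 : Matrix (Fin 2) (Fin 2) ℂ) := by
    rw [← e1, h23, smul_neg, e2, neg_neg]
  have ha0 : a = 0 := by
    have := congrFun (congrFun e3 0) 0
    simp only [Matrix.neg_apply, Matrix.smul_apply, Matrix.one_apply_eq, smul_eq_mul, mul_one] at this
    linear_combination -this / 2
  have hAzero : A = 0 := by
    ext i j
    fin_cases i <;> fin_cases j
    · show A 0 0 = (0 : Matrix (Fin 2) (Fin 2) ℂ) 0 0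
      rw [hA00]; simp
    · show A 0 1 = (0 : Matrix (Fin 2) (Fin 2) ℂ) 0 1
      rw [← ha, ha0]; simp
    · show A 1 0 = (0 : Matrix (Fin 2) (Fin 2) ℂ) 1 0
      rw [keyA 0 1, ← ha, ha0]; simp
    · show A 1 1 = (0 : Matrix (Fin 2) (Fin 2) ℂ) 1 1
      rw [hA11]; simp
  have hinv : A * ((-C2) * ((-C1) * Yᴴ)) = 1 := by
    have hc2 : ∀ X : Matrix (Fin 2) (Fin 2) ℂ, C2 * ((-C2) * X) = X := fun X => by
      rw [neg_mul, mul_neg, ← mul_assoc, hs2, neg_one_mul, neg_neg]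
    have hc1' : ∀ X : Matrix (Fin 2) (Fin 2) ℂ, C1 * ((-C1) * X) = X := fun X => by
      rw [neg_mul, mul_neg, ← mul_assoc, hs1, neg_one_mul, neg_neg]
    rw [hA]
    simp only [mul_assoc, hc2, hc1', hY']
  rw [hAzero, zero_mul] at hinv
  have := congrFun (congrFun hinv 0) 0
  simp [Matrix.one_apply] at this


set_option maxHeartbeats 1000000 in
private lemma tr_anti {A B : Matrix (Fin 4) (Fin 4) ℂ}
    (h : A * B = -(B * A)) (hB : B * B = -1) : trace A = 0 := by
  have h1 : trace ((A * B) * B) = -(trace ((A * B) * B)) := by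
    conv_lhs => rw [trace_mul_comm, ← mul_assoc, show B * A = -(A*B) by rw [h, neg_neg]]
    rw [neg_mul, trace_neg]
  have h2 : trace ((A * B) * B) = 0 := by linear_combination h1 / 2
  have h3 : trace A = -(trace ((A*B)*B)) := by
    rw [mul_assoc, hB, mul_neg_one, trace_neg, neg_neg]
  rw [h3, h2, neg_zero]

private lemma tr_pair {A B : Matrix (Fin 4) (Fin 4) ℂ}
    (h : A * B = -(B * A)) : trace (A * B) = 0 := by
  have h1 : trace (A * B) = -(trace (A * B)) := by
    conv_lhs => rw [trace_mul_comm, show B * A = -(A*B) by rw [h, neg_neg], trace_neg]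
  linear_combination h1 / 2

private lemma aux4 (Y C1 C2 C3 C4 : Matrix (Fin 4) (Fin 4) ℂ)
    (hY : Yᴴ * Y = 1) (hY' : Y * Yᴴ = 1) (hYt : Yᵀ = Y)
    (hs1 : C1 * C1 = -1) (hs2 : C2 * C2 = -1) (hs3 : C3 * C3 = -1) (hs4 : C4 * C4 = -1)
    (h12 : C1 * C2 = -(C2 * C1)) (h13 : C1 * C3 = -(C3 * C1)) (h14 : C1 * C4 = -(C4 * C1))
    (h23 : C2 * C3 = -(C3 * C2)) (h24 : C2 * C4 = -(C4 * C2)) (h34 : C3 * C4 = -(C4 * C3))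
    (hh1 : C1ᴴ = -C1) (hh2 : C2ᴴ = -C2) (hh3 : C3ᴴ = -C3) (hh4 : C4ᴴ = -C4)
    (ht1 : C1ᵀ = Y * (C1 * Yᴴ)) (ht2 : C2ᵀ = Y * (C2 * Yᴴ))
    (ht3 : C3ᵀ = Y * (C3 * Yᴴ)) (ht4 : C4ᵀ = Y * (C4 * Yᴴ)) : False := by
  have hYx : ∀ X : Matrix (Fin 4) (Fin 4) ℂ, Yᴴ * (Y * X) = X := fun X => by
    rw [← mul_assoc, hY, one_mul]
  have h21 : C2 * C1 = -(C1 * C2) := by rw [h12, neg_neg]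
  have h31 : C3 * C1 = -(C1 * C3) := by rw [h13, neg_neg]
  have h41 : C4 * C1 = -(C1 * C4) := by rw [h14, neg_neg]
  have h32 : C3 * C2 = -(C2 * C3) := by rw [h23, neg_neg]
  have h42 : C4 * C2 = -(C2 * C4) := by rw [h24, neg_neg]
  have h43 : C4 * C3 = -(C3 * C4) := by rw [h34, neg_neg]
  have r21 : ∀ X, C2 * (C1 * X) = -(C1 * (C2 * X)) := fun X => by
    rw [← mul_assoc, h21, neg_mul, mul_assoc]
  have r31 : ∀ X, C3 * (C1 * X) = -(C1 * (C3 * X)) := fun X => by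
    rw [← mul_assoc, h31, neg_mul, mul_assoc]
  have r41 : ∀ X, C4 * (C1 * X) = -(C1 * (C4 * X)) := fun X => by
    rw [← mul_assoc, h41, neg_mul, mul_assoc]
  have r32 : ∀ X, C3 * (C2 * X) = -(C2 * (C3 * X)) := fun X => by
    rw [← mul_assoc, h32, neg_mul, mul_assoc]
  have r42 : ∀ X, C4 * (C2 * X) = -(C2 * (C4 * X)) := fun X => by
    rw [← mul_assoc, h42, neg_mul, mul_assoc]
  have r43 : ∀ X, C4 * (C3 * X) = -(C3 * (C4 * X)) := fun X => by
    rw [← mul_assoc, h43, neg_mul, mul_assoc]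
  have q1 : ∀ X, C1 * (C1 * X) = -X := fun X => by rw [← mul_assoc, hs1, neg_one_mul]
  have q2 : ∀ X, C2 * (C2 * X) = -X := fun X => by rw [← mul_assoc, hs2, neg_one_mul]
  have q3 : ∀ X, C3 * (C3 * X) = -X := fun X => by rw [← mul_assoc, hs3, neg_one_mul]
  have q4 : ∀ X, C4 * (C4 * X) = -X := fun X => by rw [← mul_assoc, hs4, neg_one_mul]
  -- trace facts
  have t1 : trace C1 = 0 := tr_anti h12 hs2
  have t2 : trace C2 = 0 := tr_anti h21 hs1
  have t3 : trace C3 = 0 := tr_anti h31 hs1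
  have t4 : trace C4 = 0 := tr_anti h41 hs1
  have p12 : trace (C1 * C2) = 0 := tr_pair h12
  have p13 : trace (C1 * C3) = 0 := tr_pair h13
  have p14 : trace (C1 * C4) = 0 := tr_pair h14
  have p23 : trace (C2 * C3) = 0 := tr_pair h23
  have p24 : trace (C2 * C4) = 0 := tr_pair h24
  have p34 : trace (C3 * C4) = 0 := tr_pair h34
  have t123 : trace (C1 * (C2 * C3)) = 0 := by
    refine tr_anti ?_ hs4
    simp only [mul_assoc, r21, r31, r41, r32, r42, r43, q1, q2, q3, q4,
      h21, h31, h41, h32, h42, h43, hs1, hs2, hs3, hs4,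
      mul_neg, neg_mul, neg_neg, mul_one, one_mul]
  have t124 : trace (C1 * (C2 * C4)) = 0 := by
    refine tr_anti ?_ hs3
    simp only [mul_assoc, r21, r31, r41, r32, r42, r43, q1, q2, q3, q4,
      h21, h31, h41, h32, h42, h43, hs1, hs2, hs3, hs4,
      mul_neg, neg_mul, neg_neg, mul_one, one_mul]
  have t134 : trace (C1 * (C3 * C4)) = 0 := by
    refine tr_anti ?_ hs2
    simp only [mul_assoc, r21, r31, r41, r32, r42, r43, q1, q2, q3, q4,
      h21, h31, h41, h32, h42, h43, hs1, hs2, hs3, hs4,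
      mul_neg, neg_mul, neg_neg, mul_one, one_mul]
  have t234 : trace (C2 * (C3 * C4)) = 0 := by
    refine tr_anti ?_ hs1
    simp only [mul_assoc, r21, r31, r41, r32, r42, r43, q1, q2, q3, q4,
      h21, h31, h41, h32, h42, h43, hs1, hs2, hs3, hs4,
      mul_neg, neg_mul, neg_neg, mul_one, one_mul]
  have t1234 : trace (C1 * (C2 * (C3 * C4))) = 0 := by
    have h : (C1 * (C2 * C3)) * C4 = -(C4 * (C1 * (C2 * C3))) := by
      simp only [mul_assoc, r21, r31, r41, r32, r42, r43, q1, q2, q3, q4,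
        h21, h31, h41, h32, h42, h43, hs1, hs2, hs3, hs4,
        mul_neg, neg_mul, neg_neg, mul_one, one_mul]
    have := tr_pair h
    simpa only [mul_assoc] using this
  -- the seven matrices
  set v : Fin 7 → Matrix (Fin 4) (Fin 4) ℂ :=
    ![Y * (C1 * C2), Y * (C1 * C3), Y * (C1 * C4), Y * (C2 * C3), Y * (C2 * C4),
      Y * (C3 * C4), Y * (C1 * (C2 * C3))] with hv
  have hv0 : v 0 = Y * (C1 * C2) := rfl
  have hv1 : v 1 = Y * (C1 * C3) := rfl
  have hv2 : v 2 = Y * (C1 * C4) := rfl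
  have hv3 : v 3 = Y * (C2 * C3) := rfl
  have hv4 : v 4 = Y * (C2 * C4) := rfl
  have hv5 : v 5 = Y * (C3 * C4) := rfl
  have hv6 : v 6 = Y * (C1 * (C2 * C3)) := rfl
  have hw0 : v ⟨0, by omega⟩ = Y * (C1 * C2) := rfl
  have hw1 : v ⟨1, by omega⟩ = Y * (C1 * C3) := rfl
  have hw2 : v ⟨2, by omega⟩ = Y * (C1 * C4) := rfl
  have hw3 : v ⟨3, by omega⟩ = Y * (C2 * C3) := rfl
  have hw4 : v ⟨4, by omega⟩ = Y * (C2 * C4) := rfl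
  have hw5 : v ⟨5, by omega⟩ = Y * (C3 * C4) := rfl
  have hw6 : v ⟨6, by omega⟩ = Y * (C1 * (C2 * C3)) := rfl
  have gram_diag : ∀ i, trace ((v i)ᴴ * v i) = 4 := by
    intro i
    fin_cases i <;>
      simp only [hv0, hv1, hv2, hv3, hv4, hv5, hv6, hw0, hw1, hw2, hw3, hw4, hw5, hw6,
        conjTranspose_mul, hh1, hh2, hh3, hh4, mul_assoc, hYx,
        r21, r31, r41, r32, r42, r43, q1, q2, q3, q4,
        h21, h31, h41, h32, h42, h43, hs1, hs2, hs3, hs4,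
        mul_neg, neg_mul, neg_neg, mul_one, one_mul, trace_neg, trace_one,
        t1, t2, t3, t4, p12, p13, p14, p23, p24, p34, t123, t124, t134, t234, t1234] <;>
      norm_num
  have gram_off : ∀ i j, i ≠ j → trace ((v i)ᴴ * v j) = 0 := by
    intro i j hij
    fin_cases i <;> fin_cases j <;>
      first
      | exact absurd rfl hij
      | (simp only [hv0, hv1, hv2, hv3, hv4, hv5, hv6, hw0, hw1, hw2, hw3, hw4, hw5, hw6,
          conjTranspose_mul, hh1, hh2, hh3, hh4, mul_assoc, hYx,
          r21, r31, r41, r32, r42, r43, q1, q2, q3, q4,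
          h21, h31, h41, h32, h42, h43, hs1, hs2, hs3, hs4,
          mul_neg, neg_mul, neg_neg, mul_one, one_mul, trace_neg, trace_one, neg_zero,
          t1, t2, t3, t4, p12, p13, p14, p23, p24, p34, t123, t124, t134, t234, t1234])
  -- linear independence of v
  have hli : LinearIndependent ℂ v := by
    rw [Fintype.linearIndependent_iff]
    intro g hg j
    have h := congrArg (fun M => trace ((v j)ᴴ * M)) hg
    simp only [Matrix.mul_sum, Matrix.mul_smul, trace_sum, trace_smul,
      Matrix.mul_zero, trace_zero, smul_eq_mul] at h
    rw [Finset.sum_eq_single j] at h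
    · rw [gram_diag j] at h
      linear_combination h / 4
    · intro i _ hne
      rw [gram_off j i (Ne.symm hne), mul_zero]
    · intro hmem
      exact absurd (Finset.mem_univ j) hmem
  -- skew-symmetry of each v i
  have hskew : ∀ i, (v i)ᵀ = -(v i) := by
    intro i
    fin_cases i <;>
      simp only [hv0, hv1, hv2, hv3, hv4, hv5, hv6, hw0, hw1, hw2, hw3, hw4, hw5, hw6,
        transpose_mul, ht1, ht2, ht3, ht4, hYt, hY, mul_assoc, hYx,
        r21, r31, r41, r32, r42, r43, q1, q2, q3, q4,
        h21, h31, h41, h32, h42, h43, hs1, hs2, hs3, hs4,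
        mul_neg, neg_mul, neg_neg, mul_one, one_mul]
  -- map to upper triangular coordinates
  set w : Fin 7 → (Fin 6 → ℂ) :=
    fun i => ![v i 0 1, v i 0 2, v i 0 3, v i 1 2, v i 1 3, v i 2 3] with hwdef
  have hwli : LinearIndependent ℂ w := by
    rw [Fintype.linearIndependent_iff]
    intro g hg j
    set M : Matrix (Fin 4) (Fin 4) ℂ := ∑ i, g i • v i with hM
    have hMe : ∀ a b : Fin 4, M a b = ∑ i, g i * v i a b := by
      intro a b
      rw [hM]
      simp [Finset.sum_apply, Matrix.sum_apply]
    have hcoord : ∀ k : Fin 6, (∑ i, g i • w i) k = 0 := fun k => by rw [hg]; rfl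
    have hup : ∀ a b : Fin 4, ((a, b) = (0,1) ∨ (a, b) = (0,2) ∨ (a, b) = (0,3) ∨
        (a, b) = (1,2) ∨ (a, b) = (1,3) ∨ (a, b) = (2,3)) → M a b = 0 := by
      intro a b hab
      rcases hab with h | h | h | h | h | h <;>
        (injection h with h1 h2; subst h1; subst h2)
      · have := hcoord 0
        simpa [hwdef, Finset.sum_apply, Pi.smul_apply, smul_eq_mul, hMe] using this
      · have := hcoord 1
        simpa [hwdef, Finset.sum_apply, Pi.smul_apply, smul_eq_mul, hMe] using this
      · have := hcoord 2
        simpa [hwdef, Finset.sum_apply, Pi.smul_apply, smul_eq_mul, hMe] using this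
      · have := hcoord 3
        simpa [hwdef, Finset.sum_apply, Pi.smul_apply, smul_eq_mul, hMe] using this
      · have := hcoord 4
        simpa [hwdef, Finset.sum_apply, Pi.smul_apply, smul_eq_mul, hMe] using this
      · have := hcoord 5
        simpa [hwdef, Finset.sum_apply, Pi.smul_apply, smul_eq_mul, hMe] using this
    have hMt : ∀ a b : Fin 4, M b a = -(M a b) := by
      intro a b
      have : Mᵀ = -M := by
        rw [hM, transpose_sum]
        simp only [transpose_smul, hskew, smul_neg]
        rw [← Finset.sum_neg_distrib]
      have := congrFun (congrFun this a) b
      simpa [transpose_apply] using this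
    have hM0 : M = 0 := by
      ext a b
      have diag : ∀ c : Fin 4, M c c = 0 := fun c => by
        have := hMt c c; linear_combination this / 2
      fin_cases a <;> fin_cases b
      · show M 0 0 = (0 : Matrix (Fin 4) (Fin 4) ℂ) 0 0
        rw [diag 0, Matrix.zero_apply]
      · show M 0 1 = (0 : Matrix (Fin 4) (Fin 4) ℂ) 0 1
        rw [hup 0 1 (by norm_num), Matrix.zero_apply]
      · show M 0 2 = (0 : Matrix (Fin 4) (Fin 4) ℂ) 0 2
        rw [hup 0 2 (by norm_num), Matrix.zero_apply]
      · show M 0 3 = (0 : Matrix (Fin 4) (Fin 4) ℂ) 0 3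
        rw [hup 0 3 (by norm_num), Matrix.zero_apply]
      · show M 1 0 = (0 : Matrix (Fin 4) (Fin 4) ℂ) 1 0
        rw [hMt 0 1, hup 0 1 (by norm_num), neg_zero, Matrix.zero_apply]
      · show M 1 1 = (0 : Matrix (Fin 4) (Fin 4) ℂ) 1 1
        rw [diag 1, Matrix.zero_apply]
      · show M 1 2 = (0 : Matrix (Fin 4) (Fin 4) ℂ) 1 2
        rw [hup 1 2 (by norm_num), Matrix.zero_apply]
      · show M 1 3 = (0 : Matrix (Fin 4) (Fin 4) ℂ) 1 3
        rw [hup 1 3 (by norm_num), Matrix.zero_apply]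
      · show M 2 0 = (0 : Matrix (Fin 4) (Fin 4) ℂ) 2 0
        rw [hMt 0 2, hup 0 2 (by norm_num), neg_zero, Matrix.zero_apply]
      · show M 2 1 = (0 : Matrix (Fin 4) (Fin 4) ℂ) 2 1
        rw [hMt 1 2, hup 1 2 (by norm_num), neg_zero, Matrix.zero_apply]
      · show M 2 2 = (0 : Matrix (Fin 4) (Fin 4) ℂ) 2 2
        rw [diag 2, Matrix.zero_apply]
      · show M 2 3 = (0 : Matrix (Fin 4) (Fin 4) ℂ) 2 3
        rw [hup 2 3 (by norm_num), Matrix.zero_apply]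
      · show M 3 0 = (0 : Matrix (Fin 4) (Fin 4) ℂ) 3 0
        rw [hMt 0 3, hup 0 3 (by norm_num), neg_zero, Matrix.zero_apply]
      · show M 3 1 = (0 : Matrix (Fin 4) (Fin 4) ℂ) 3 1
        rw [hMt 1 3, hup 1 3 (by norm_num), neg_zero, Matrix.zero_apply]
      · show M 3 2 = (0 : Matrix (Fin 4) (Fin 4) ℂ) 3 2
        rw [hMt 2 3, hup 2 3 (by norm_num), neg_zero, Matrix.zero_apply]
      · show M 3 3 = (0 : Matrix (Fin 4) (Fin 4) ℂ) 3 3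
        rw [diag 3, Matrix.zero_apply]
    exact Fintype.linearIndependent_iff.mp hli g (by rw [← hM]; exact hM0) j
  have hcard := hwli.fintype_card_le_finrank
  rw [Module.finrank_fin_fun, Fintype.card_fin] at hcard
  omega

/-- For symmetric Clifford-type Yukawa couplings: if `n = 2` then `m ≤ 3`,
and if `n = 4` then `m ≤ 4`. -/
theorem stmt_6 (n m : ℕ) (hn : 1 ≤ n) (hm : 1 ≤ m)
    (Y : Fin m → Matrix (Fin n) (Fin n) ℂ)
    (hsym : ∀ α, (Y α)ᵀ = Y α)
    (hcliff : ∀ α β, (Y α)ᴴ * Y β + (Y β)ᴴ * Y α =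
      if α = β then (2 : ℂ) • (1 : Matrix (Fin n) (Fin n) ℂ) else 0) :
    (n = 2 → m ≤ 3) ∧ (n = 4 → m ≤ 4) := by
  have hU : ∀ α, (Y α)ᴴ * Y α = 1 := by
    intro α
    have h := hcliff α α
    rw [if_pos rfl] at h
    have h2 : (2:ℂ) • ((Y α)ᴴ * Y α) = (2:ℂ) • (1 : Matrix (Fin n) (Fin n) ℂ) := by
      rw [two_smul]; exact h
    have h3 := congrArg (fun M => (2:ℂ)⁻¹ • M) h2
    simpa [smul_smul] using h3
  have hU' : ∀ α, Y α * (Y α)ᴴ = 1 := fun α => mul_eq_one_comm.mp (hU α)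
  have hUx : ∀ α (X : Matrix (Fin n) (Fin n) ℂ), Y α * ((Y α)ᴴ * X) = X := fun α X => by
    rw [← mul_assoc, hU', one_mul]
  have hanti : ∀ α β, α ≠ β → (Y α)ᴴ * Y β = -((Y β)ᴴ * Y α) := by
    intro α β hne
    have h := hcliff α β
    rw [if_neg hne] at h
    exact eq_neg_of_add_eq_zero_left h
  have hct : ∀ α, ((Y α)ᴴ)ᵀ = (Y α)ᴴ := by
    intro α
    ext i j
    simp only [transpose_apply, conjTranspose_apply]
    exact congrArg star (show Y α i j = Y α j i from congrFun (congrFun (hsym α) j) i)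
  -- generic facts about C β := (Y α₀)ᴴ * Y β
  have hCC : ∀ (α₀ β γ : Fin m), α₀ ≠ β →
      ((Y α₀)ᴴ * Y β) * ((Y α₀)ᴴ * Y γ) = -((Y β)ᴴ * Y γ) := by
    intro α₀ β γ hne
    rw [hanti α₀ β hne, neg_mul, mul_assoc, hUx α₀]
  have hsq : ∀ (α₀ β : Fin m), α₀ ≠ β →
      ((Y α₀)ᴴ * Y β) * ((Y α₀)ᴴ * Y β) = -1 := by
    intro α₀ β hne
    rw [hCC α₀ β β hne, hU β]
  have hac : ∀ (α₀ β γ : Fin m), α₀ ≠ β → α₀ ≠ γ → β ≠ γ →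
      ((Y α₀)ᴴ * Y β) * ((Y α₀)ᴴ * Y γ) =
        -(((Y α₀)ᴴ * Y γ) * ((Y α₀)ᴴ * Y β)) := by
    intro α₀ β γ h1 h2 h3
    rw [hCC α₀ β γ h1, hCC α₀ γ β h2, hanti β γ h3]
  have hherm : ∀ (α₀ β : Fin m), α₀ ≠ β →
      ((Y α₀)ᴴ * Y β)ᴴ = -((Y α₀)ᴴ * Y β) := by
    intro α₀ β hne
    rw [conjTranspose_mul, conjTranspose_conjTranspose]
    exact hanti β α₀ (Ne.symm hne)
  have htr : ∀ (α₀ β : Fin m),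
      ((Y α₀)ᴴ * Y β)ᵀ = Y α₀ * (((Y α₀)ᴴ * Y β) * (Y α₀)ᴴ) := by
    intro α₀ β
    rw [transpose_mul, hct, hsym, mul_assoc, ← mul_assoc (Y α₀), hU', one_mul]
  constructor
  · intro hn2
    subst hn2
    by_contra hc
    push_neg at hc
    have h4 : 4 ≤ m := hc
    set a0 : Fin m := ⟨0, by omega⟩
    set a1 : Fin m := ⟨1, by omega⟩
    set a2 : Fin m := ⟨2, by omega⟩
    set a3 : Fin m := ⟨3, by omega⟩
    have e01 : a0 ≠ a1 := by simp [a0, a1, Fin.ext_iff]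
    have e02 : a0 ≠ a2 := by simp [a0, a2, Fin.ext_iff]
    have e03 : a0 ≠ a3 := by simp [a0, a3, Fin.ext_iff]
    have e12 : a1 ≠ a2 := by simp [a1, a2, Fin.ext_iff]
    have e13 : a1 ≠ a3 := by simp [a1, a3, Fin.ext_iff]
    have e23 : a2 ≠ a3 := by simp [a2, a3, Fin.ext_iff]
    exact aux2 (Y a0) ((Y a0)ᴴ * Y a1) ((Y a0)ᴴ * Y a2) ((Y a0)ᴴ * Y a3)
      (hU a0) (hU' a0) (hsym a0)
      (hsq a0 a1 e01) (hsq a0 a2 e02) (hsq a0 a3 e03)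
      (hac a0 a1 a2 e01 e02 e12) (hac a0 a1 a3 e01 e03 e13)
      (hac a0 a2 a3 e02 e03 e23)
      (htr a0 a1) (htr a0 a2) (htr a0 a3)
  · intro hn4
    subst hn4
    by_contra hc
    push_neg at hc
    have h5 : 5 ≤ m := hc
    set a0 : Fin m := ⟨0, by omega⟩
    set a1 : Fin m := ⟨1, by omega⟩
    set a2 : Fin m := ⟨2, by omega⟩
    set a3 : Fin m := ⟨3, by omega⟩
    set a4 : Fin m := ⟨4, by omega⟩
    have e01 : a0 ≠ a1 := by simp [a0, a1, Fin.ext_iff]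
    have e02 : a0 ≠ a2 := by simp [a0, a2, Fin.ext_iff]
    have e03 : a0 ≠ a3 := by simp [a0, a3, Fin.ext_iff]
    have e04 : a0 ≠ a4 := by simp [a0, a4, Fin.ext_iff]
    have e12 : a1 ≠ a2 := by simp [a1, a2, Fin.ext_iff]
    have e13 : a1 ≠ a3 := by simp [a1, a3, Fin.ext_iff]
    have e14 : a1 ≠ a4 := by simp [a1, a4, Fin.ext_iff]
    have e23 : a2 ≠ a3 := by simp [a2, a3, Fin.ext_iff]
    have e24 : a2 ≠ a4 := by simp [a2, a4, Fin.ext_iff]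
    have e34 : a3 ≠ a4 := by simp [a3, a4, Fin.ext_iff]
    exact aux4 (Y a0) ((Y a0)ᴴ * Y a1) ((Y a0)ᴴ * Y a2) ((Y a0)ᴴ * Y a3) ((Y a0)ᴴ * Y a4)
      (hU a0) (hU' a0) (hsym a0)
      (hsq a0 a1 e01) (hsq a0 a2 e02) (hsq a0 a3 e03) (hsq a0 a4 e04)
      (hac a0 a1 a2 e01 e02 e12) (hac a0 a1 a3 e01 e03 e13) (hac a0 a1 a4 e01 e04 e14)
      (hac a0 a2 a3 e02 e03 e23) (hac a0 a2 a4 e02 e04 e24) (hac a0 a3 a4 e03 e04 e34)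
      (hherm a0 a1 e01) (hherm a0 a2 e02) (hherm a0 a3 e03) (hherm a0 a4 e04)
      (htr a0 a1) (htr a0 a2) (htr a0 a3) (htr a0 a4)
end

section
/- Let n ≥ 1, m ≥ 1, and let Y_1, …, Y_m be n×n complex matrices, each symmetric (Y_αᵀ = Y_α), satisfying the Clifford-type Yukawa relations Y_α* Y_β + Y_β* Y_α = 2 δ_{αβ} I_n for all α, β. Then n is divisible by 2^⌊(m−1)/2⌋. -/
open Matrix

private lemma mulpair_comm' {R : Type*} [Ring R] {x c d : R}
    (h1 : x*c = c*x) (h2 : x*d = d*x) : x*(c*d) = (c*d)*x := by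
  rw [← mul_assoc, h1, mul_assoc, h2, ← mul_assoc]

private lemma mulpair_anticomm' {R : Type*} [Ring R] {x c d : R}
    (h1 : x*c = -(c*x)) (h2 : x*d = -(d*x)) : x*(c*d) = (c*d)*x := by
  rw [← mul_assoc, h1, neg_mul, mul_assoc, h2, mul_neg, neg_neg, ← mul_assoc]

private lemma trace_zero_of_anticonj {n : ℕ} {g M : Matrix (Fin n) (Fin n) ℂ}
    (hg : g * g = -1) (h : g * M = -(M * g)) : M.trace = 0 := by
  have h1 : M = g * M * g := by
    rw [h, neg_mul, mul_assoc, hg, mul_neg_one, neg_neg]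
  have h2 : M.trace = -M.trace := by
    conv_lhs => rw [h1]
    rw [mul_assoc, Matrix.trace_mul_comm g (M * g), mul_assoc, hg, mul_neg_one,
      Matrix.trace_neg]
  have h3 : M.trace + M.trace = 0 := by linear_combination h2
  exact add_self_eq_zero.mp h3

/-- Abstract Clifford lemma: `2*t` anticommuting complex `n×n` matrices
squaring to `-1` force `2^t ∣ n`. -/
private lemma cliff_dvd (n t : ℕ) (G : ℕ → Matrix (Fin n) (Fin n) ℂ)
    (hsq : ∀ j, j < 2*t → G j * G j = -1)
    (hanti : ∀ j k, j < 2*t → k < 2*t → j ≠ k → G j * G k = -(G k * G j)) :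
    2 ^ t ∣ n := by
  classical
  set P : ℕ → Matrix (Fin n) (Fin n) ℂ :=
    fun j => Complex.I • (G (2*j) * G (2*j+1)) with hPdef
  -- squares
  have hPsq : ∀ j, j < t → P j * P j = 1 := by
    intro j hj
    have ha : 2*j < 2*t := by omega
    have hb : 2*j+1 < 2*t := by omega
    have h1 : G (2*j+1) * G (2*j) = -(G (2*j) * G (2*j+1)) :=
      hanti _ _ hb ha (by omega)
    have key : G (2*j) * G (2*j+1) * (G (2*j) * G (2*j+1)) = -1 := by
      have : G (2*j) * G (2*j+1) * (G (2*j) * G (2*j+1))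
          = G (2*j) * ((G (2*j+1) * G (2*j)) * G (2*j+1)) := by
        noncomm_ring
      rw [this, h1, neg_mul, mul_neg, mul_assoc, hsq _ hb, mul_neg_one,
        mul_neg, neg_neg, hsq _ ha]
    simp only [hPdef, smul_mul_assoc, mul_smul_comm, smul_smul, key,
      Complex.I_mul_I, neg_smul, one_smul, smul_neg, neg_neg]
  -- commutation of G with P
  have hGcommP : ∀ a j, a < 2*t → j < t → a ≠ 2*j → a ≠ 2*j+1 →
      G a * P j = P j * G a := by
    intro a j ha hj h1 h2
    have key : G a * (G (2*j) * G (2*j+1)) = (G (2*j) * G (2*j+1)) * G a :=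
      mulpair_anticomm' (hanti _ _ ha (by omega) h1) (hanti _ _ ha (by omega) h2)
    simp only [hPdef, mul_smul_comm, smul_mul_assoc, key]
  -- anticommutation of G (2*j) with P j
  have hGsantiP : ∀ j, j < t → G (2*j) * P j = -(P j * G (2*j)) := by
    intro j hj
    have ha : 2*j < 2*t := by omega
    have hb : 2*j+1 < 2*t := by omega
    have key : G (2*j) * (G (2*j) * G (2*j+1))
        = -((G (2*j) * G (2*j+1)) * G (2*j)) := by
      have h1 : G (2*j+1) * G (2*j) = -(G (2*j) * G (2*j+1)) :=
        hanti _ _ hb ha (by omega)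
      rw [mul_assoc, h1, mul_neg, ← mul_assoc, neg_neg]
    simp only [hPdef, mul_smul_comm, smul_mul_assoc, key, smul_neg]
  -- P's commute pairwise
  have hPP : ∀ j k, j < t → k < t → j ≠ k → P j * P k = P k * P j := by
    intro j k hj hk hjk
    have h1 : G (2*k) * (G (2*j) * G (2*j+1)) = (G (2*j) * G (2*j+1)) * G (2*k) :=
      mulpair_anticomm' (hanti _ _ (by omega) (by omega) (by omega))
        (hanti _ _ (by omega) (by omega) (by omega))
    have h2 : G (2*k+1) * (G (2*j) * G (2*j+1)) = (G (2*j) * G (2*j+1)) * G (2*k+1) :=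
      mulpair_anticomm' (hanti _ _ (by omega) (by omega) (by omega))
        (hanti _ _ (by omega) (by omega) (by omega))
    have key : (G (2*j) * G (2*j+1)) * (G (2*k) * G (2*k+1))
        = (G (2*k) * G (2*k+1)) * (G (2*j) * G (2*j+1)) :=
      mulpair_comm' h1.symm h2.symm
    simp only [hPdef, smul_mul_assoc, mul_smul_comm, key]
  -- the partial products
  set Q : ℕ → Matrix (Fin n) (Fin n) ℂ :=
    fun s => ((List.range s).map fun j => 1 + P j).prod with hQdef
  have hQsucc : ∀ s, Q (s+1) = Q s * (1 + P s) := by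
    intro s
    simp [hQdef, List.range_succ]
  have hQ0 : Q 0 = 1 := by simp [hQdef]
  -- anything commuting with the P j's commutes with Q s
  have hQcomm : ∀ s (x : Matrix (Fin n) (Fin n) ℂ),
      (∀ j, j < s → Commute x (P j)) → Commute x (Q s) := by
    intro s x hx
    apply Commute.list_prod_right
    intro y hy
    simp only [List.mem_map, List.mem_range] at hy
    obtain ⟨j, hj, rfl⟩ := hy
    exact (Commute.one_right x).add_right (hx j hj)
  -- idempotency up to a factor 2^s
  have hQsq : ∀ s, s ≤ t → Q s * Q s = ((2:ℂ)^s) • Q s := by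
    intro s
    induction s with
    | zero => intro _; simp [hQ0]
    | succ s ih =>
      intro hs
      have hcom : Commute (1 + P s) (Q s) := by
        apply hQcomm
        intro j hj
        exact Commute.add_left (Commute.one_left (P j))
          (hPP s j (by omega) (by omega) (by omega))
      have hsq2 : (1 + P s) * (1 + P s) = (2:ℂ) • (1 + P s) := by
        have hP := hPsq s (by omega)
        rw [mul_add, add_mul, add_mul, one_mul, one_mul, mul_one, hP, two_smul]
        abel
      rw [hQsucc]
      calc Q s * (1 + P s) * (Q s * (1 + P s))
          = Q s * ((1 + P s) * Q s) * (1 + P s) := by noncomm_ring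
        _ = Q s * (Q s * (1 + P s)) * (1 + P s) := by rw [hcom.eq]
        _ = (Q s * Q s) * ((1 + P s) * (1 + P s)) := by noncomm_ring
        _ = ((2:ℂ)^s • Q s) * ((2:ℂ) • (1 + P s)) := by rw [ih (by omega), hsq2]
        _ = (2:ℂ)^(s+1) • (Q s * (1 + P s)) := by
            rw [smul_mul_assoc, mul_smul_comm, smul_smul, pow_succ]
  -- trace of Q s is n
  have hQtr : ∀ s, s ≤ t → (Q s).trace = (n : ℂ) := by
    intro s
    induction s with
    | zero => intro _; simp [hQ0]
    | succ s ih =>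
      intro hs
      have htr0 : (Q s * P s).trace = 0 := by
        apply trace_zero_of_anticonj (g := G (2*s)) (hsq _ (by omega))
        have hgQ : Commute (G (2*s)) (Q s) := by
          apply hQcomm
          intro j hj
          exact hGcommP _ _ (by omega) (by omega) (by omega) (by omega)
        have hgP := hGsantiP s (by omega)
        calc G (2*s) * (Q s * P s) = (G (2*s) * Q s) * P s := by rw [mul_assoc]
          _ = (Q s * G (2*s)) * P s := by rw [hgQ.eq]
          _ = Q s * (G (2*s) * P s) := by rw [mul_assoc]
          _ = Q s * -(P s * G (2*s)) := by rw [hgP]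
          _ = -(Q s * P s * G (2*s)) := by rw [mul_neg, mul_assoc]
      rw [hQsucc, mul_add, mul_one, Matrix.trace_add, htr0, add_zero,
        ih (by omega)]
  -- the idempotent
  set E : Matrix (Fin n) (Fin n) ℂ := ((2:ℂ)^t)⁻¹ • Q t with hEdef
  have h2t : ((2:ℂ)^t) ≠ 0 := pow_ne_zero _ two_ne_zero
  have hE : E * E = E := by
    rw [hEdef, smul_mul_assoc, mul_smul_comm, hQsq t le_rfl, smul_smul, smul_smul]
    congr 1
    field_simp
  have hEtr : E.trace = ((2:ℂ)^t)⁻¹ * n := by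
    rw [hEdef, Matrix.trace_smul, hQtr t le_rfl, smul_eq_mul]
  -- pass to the linear map and use the trace of a projection
  set f : (Fin n → ℂ) →ₗ[ℂ] (Fin n → ℂ) := Matrix.mulVecLin E with hfdef
  have hff : f ∘ₗ f = f := by
    rw [hfdef, ← Matrix.mulVecLin_mul, hE]
  obtain ⟨p, hp⟩ := (LinearMap.isProj_iff_isIdempotentElem f).mpr hff
  have htr := hp.trace
  have htrf : LinearMap.trace ℂ (Fin n → ℂ) f = E.trace := by
    rw [LinearMap.trace_eq_matrix_trace ℂ (Pi.basisFun ℂ (Fin n)),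
      LinearMap.toMatrix_eq_toMatrix', hfdef]
    congr 1
    exact LinearMap.toMatrix'_toLin' E
  have key : (n : ℂ) = (2:ℂ)^t * (Module.finrank ℂ p : ℂ) := by
    have := htrf.symm.trans htr
    rw [hEtr] at this
    field_simp at this
    linear_combination this
  have keyn : n = 2^t * Module.finrank ℂ p := by
    exact_mod_cast key
  exact ⟨Module.finrank ℂ p, keyn⟩

/-- For symmetric Clifford-type Yukawa couplings `Y₁, …, Y_m` on `ℂ^n`,
`n` is divisible by `2 ^ ⌊(m-1)/2⌋`. -/
theorem stmt_7 (n m : ℕ) (hn : 1 ≤ n) (hm : 1 ≤ m)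
    (Y : Fin m → Matrix (Fin n) (Fin n) ℂ)
    (hsym : ∀ α, (Y α)ᵀ = Y α)
    (hcliff : ∀ α β, (Y α)ᴴ * Y β + (Y β)ᴴ * Y α =
      if α = β then (2 : ℂ) • (1 : Matrix (Fin n) (Fin n) ℂ) else 0) :
    2 ^ ((m - 1) / 2) ∣ n := by
  classical
  haveI : NeZero m := ⟨by omega⟩
  -- unitarity
  have hunit : ∀ α, (Y α)ᴴ * Y α = 1 := by
    intro α
    have h := hcliff α α
    rw [if_pos rfl] at h
    have h2 : (2:ℂ) • ((Y α)ᴴ * Y α) = (2:ℂ) • (1 : Matrix (Fin n) (Fin n) ℂ) := by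
      rw [two_smul]; exact h
    exact smul_right_injective _ (two_ne_zero) h2
  -- conjugate transposes are symmetric too
  have hsymH : ∀ α, ((Y α)ᴴ)ᵀ = (Y α)ᴴ := by
    intro α
    ext i j
    have h := congrFun (congrFun (hsym α) j) i
    simp only [Matrix.transpose_apply, Matrix.conjTranspose_apply] at *
    rw [h]
  -- the transposed (conjugate) relations
  have hcliff' : ∀ α β, Y α * (Y β)ᴴ + Y β * (Y α)ᴴ =
      if α = β then (2 : ℂ) • (1 : Matrix (Fin n) (Fin n) ℂ) else 0 := by
    intro α β
    have h := congrArg Matrix.transpose (hcliff α β)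
    rw [Matrix.transpose_add, Matrix.transpose_mul, Matrix.transpose_mul,
      hsym, hsym, hsymH, hsymH] at h
    rw [add_comm] at h
    rw [h]
    split_ifs with hab
    · rw [Matrix.transpose_smul, Matrix.transpose_one]
    · rw [Matrix.transpose_zero]
  set t := (m - 1) / 2 with ht
  have h2t : 2 * t ≤ m - 1 := by
    have := Nat.div_mul_le_self (m-1) 2
    omega
  set G : ℕ → Matrix (Fin n) (Fin n) ℂ :=
    fun j => if h : j + 1 < m then (Y 0)ᴴ * Y ⟨j+1, h⟩ else 1 with hGdef
  have hGmul : ∀ a b (ha : a + 1 < m) (hb : b + 1 < m),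
      G a * G b = -((Y ⟨a+1, ha⟩)ᴴ * Y ⟨b+1, hb⟩) := by
    intro a b ha hb
    set α : Fin m := ⟨a+1, ha⟩
    set β : Fin m := ⟨b+1, hb⟩
    have hα0 : α ≠ 0 := by
      intro h
      have h' := congrArg Fin.val h
      rw [Fin.val_zero] at h'
      exact Nat.succ_ne_zero a h' 
    have h1 : Y α * (Y 0)ᴴ = -(Y 0 * (Y α)ᴴ) := by
      have h := hcliff' α 0
      rw [if_neg hα0] at h
      exact eq_neg_of_add_eq_zero_left h
    have : G a * G b = (Y 0)ᴴ * Y α * ((Y 0)ᴴ * Y β) := by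
      simp only [hGdef, dif_pos ha, dif_pos hb]
      rfl
    rw [this, mul_assoc, ← mul_assoc (Y α), h1, neg_mul, mul_neg, ← mul_assoc,
      ← mul_assoc, hunit 0, one_mul]
  have hsqG : ∀ j, j < 2*t → G j * G j = -1 := by
    intro j hj
    have hj1 : j + 1 < m := by omega
    rw [hGmul j j hj1 hj1, hunit]
  have hantiG : ∀ j k, j < 2*t → k < 2*t → j ≠ k → G j * G k = -(G k * G j) := by
    intro j k hj hk hjk
    have hj1 : j + 1 < m := by omega
    have hk1 : k + 1 < m := by omega
    have hne : (⟨j+1, hj1⟩ : Fin m) ≠ ⟨k+1, hk1⟩ := by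
      intro h
      have h' : j + 1 = k + 1 := congrArg Fin.val h
      omega
    have h := hcliff ⟨j+1, hj1⟩ ⟨k+1, hk1⟩
    rw [if_neg hne] at h
    apply eq_neg_of_add_eq_zero_left
    rw [hGmul j k hj1 hk1, hGmul k j hk1 hj1]
    rw [← neg_add, h, neg_zero]
  exact cliff_dvd n t G hsqG hantiG
end

section
/- Let Y be an n×n complex symmetric matrix (Yᵀ = Y) such that D := Y* Y is a diagonal matrix (where * denotes conjugate transpose). Then D Y = Y D; equivalently, writing d_i for the i-th diagonal entry of D, one has Y_{ij} (d_i − d_j) = 0 for all indices i, j. (This is the relation Y_{α ij}(y_F^i − y_F^j) = 0 between Yukawa couplings and the eigenvalues of the diagonalized fermionic trace.) -/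
open Matrix

/-- If `Y` is complex symmetric and `D := Yᴴ * Y` is diagonal, then `D` commutes
with `Y`; equivalently `Y i j * (D i i - D j j) = 0` for all `i, j`. -/
theorem stmt_8 (n : ℕ) (Y : Matrix (Fin n) (Fin n) ℂ)
    (hsym : Yᵀ = Y) (hdiag : (Yᴴ * Y).IsDiag) :
    (Yᴴ * Y) * Y = Y * (Yᴴ * Y) ∧
    ∀ i j, Y i j * ((Yᴴ * Y) i i - (Yᴴ * Y) j j) = 0 := by
  have hs : ∀ i j, Y j i = Y i j := fun i j => by
    conv_rhs => rw [← hsym, transpose_apply]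
  -- D is Hermitian
  have hherm : (Yᴴ * Y)ᴴ = Yᴴ * Y := by
    rw [conjTranspose_mul, conjTranspose_conjTranspose]
  have hreal : ∀ i j, star ((Yᴴ * Y) i j) = (Yᴴ * Y) i j := by
    intro i j
    by_cases h : i = j
    · subst h
      have := congrFun (congrFun hherm i) i
      simpa [conjTranspose_apply] using this
    · rw [hdiag h]
      simp
  -- Y * Yᴴ = Yᴴ * Y
  have hcomm : Y * Yᴴ = Yᴴ * Y := by
    ext i j
    rw [← hreal i j]
    simp only [mul_apply, conjTranspose_apply, star_sum, star_mul', star_star]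
    refine Finset.sum_congr rfl fun k _ => ?_
    rw [hs k i, hs k j]
  have hmul : (Yᴴ * Y) * Y = Y * (Yᴴ * Y) := by
    rw [← mul_assoc, hcomm, mul_assoc]
  refine ⟨hmul, fun i j => ?_⟩
  have h1 : ((Yᴴ * Y) * Y) i j = (Yᴴ * Y) i i * Y i j := by
    rw [mul_apply]
    rw [Finset.sum_eq_single i]
    · intro k _ hk
      rw [hdiag (Ne.symm hk), zero_mul]
    · intro h; exact absurd (Finset.mem_univ i) h
  have h2 : (Y * (Yᴴ * Y)) i j = Y i j * (Yᴴ * Y) j j := by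
    rw [mul_apply]
    rw [Finset.sum_eq_single j]
    · intro k _ hk
      rw [hdiag hk, mul_zero]
    · intro h; exact absurd (Finset.mem_univ j) h
  have := congrFun (congrFun hmul i) j
  rw [h1, h2] at this
  ring_nf
  rw [mul_comm] at this
  linear_combination this
end

section
/- Let n ≥ 1, m ≥ 1, let Y_1, …, Y_m be n×n complex matrices, each symmetric (Y_αᵀ = Y_α), and let X_1, …, X_m be n×n real diagonal matrices such that Y_α* Y_β + Y_β* Y_α = 2 δ_{αβ} X_α for all α, β. Then for every α: Σ_{β=1}^m Y_β Y_α* Y_β = 2 Y_α X_α − (Σ_{β=1}^m X_β) Y_α. (This identity converts the cubic term of the one-loop Yukawa finiteness condition into an expression linear in the Yukawa couplings.) -/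
open Matrix
open scoped BigOperators

/-- If the symmetric Yukawa couplings satisfy
`Yαᴴ Yβ + Yβᴴ Yα = 2 δ_{αβ} Xα` with `Xα` real diagonal, then the cubic term of
the Yukawa finiteness condition becomes linear:
`Σ_β Yβ Yαᴴ Yβ = 2 Yα Xα − (Σ_β Xβ) Yα`. -/
theorem stmt_9 (n m : ℕ) (hn : 1 ≤ n) (hm : 1 ≤ m)
    (Y : Fin m → Matrix (Fin n) (Fin n) ℂ)
    (x : Fin m → Fin n → ℝ)
    (hsym : ∀ α, (Y α)ᵀ = Y α)
    (hdiag : ∀ α β, (Y α)ᴴ * Y β + (Y β)ᴴ * Y α =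
      if α = β then (2 : ℂ) • Matrix.diagonal (fun i => (x α i : ℂ)) else 0) :
    ∀ α, ∑ β, Y β * (Y α)ᴴ * Y β =
      (2 : ℂ) • (Y α * Matrix.diagonal (fun i => (x α i : ℂ)))
        - (∑ β, Matrix.diagonal (fun i => (x β i : ℂ))) * Y α := by
  intro α
  set D : Fin m → Matrix (Fin n) (Fin n) ℂ :=
    fun β => Matrix.diagonal (fun i => (x β i : ℂ)) with hDdef
  -- conjugate transposes of the Y's are symmetric too
  have hA : ∀ γ, ((Y γ)ᴴ)ᵀ = (Y γ)ᴴ := by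
    intro γ
    ext i j
    simp only [Matrix.transpose_apply, Matrix.conjTranspose_apply]
    have h := congrFun (congrFun (hsym γ) i) j
    simp only [Matrix.transpose_apply] at h
    rw [h]
  -- `Yβᴴ Yβ = Dβ`
  have hD : ∀ β, (Y β)ᴴ * Y β = D β := by
    intro β
    have h := hdiag β β
    rw [if_pos rfl] at h
    have h2 : (2 : ℂ) • ((Y β)ᴴ * Y β) = (2 : ℂ) • D β := by
      rw [two_smul]; exact h
    exact smul_right_injective _ (two_ne_zero) h2
  -- `Yβ Yβᴴ = Dβ`
  have hD' : ∀ β, Y β * (Y β)ᴴ = D β := by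
    intro β
    have : (((Y β)ᴴ * Y β))ᵀ = Y β * (Y β)ᴴ := by
      rw [Matrix.transpose_mul, hA, hsym]
    rw [← this, hD, hDdef, Matrix.diagonal_transpose]
  have key : ∀ β, Y β * (Y α)ᴴ * Y β =
      (if α = β then (2 : ℂ) • (Y α * D α) else 0) - D β * Y α := by
    intro β
    have h1 : (Y α)ᴴ * Y β =
        (if α = β then (2 : ℂ) • D α else 0) - (Y β)ᴴ * Y α :=
      eq_sub_of_add_eq (hdiag α β)
    rw [mul_assoc, h1, Matrix.mul_sub, ← mul_assoc, hD' β]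
    congr 1
    by_cases h : α = β
    · subst h
      simp [Matrix.mul_smul]
    · simp [h]
  calc ∑ β, Y β * (Y α)ᴴ * Y β
      = ∑ β, ((if α = β then (2 : ℂ) • (Y α * D α) else 0) - D β * Y α) := by
        exact Finset.sum_congr rfl fun β _ => key β
    _ = (∑ β, if α = β then (2 : ℂ) • (Y α * D α) else 0)
          - ∑ β, D β * Y α := by rw [Finset.sum_sub_distrib]
    _ = (2 : ℂ) • (Y α * D α) - (∑ β, D β) * Y α := by
        rw [Finset.sum_ite_eq, if_pos (Finset.mem_univ α), Finset.sum_mul]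
end

section
/- Let n ≥ 1, m ≥ 1, let Y_1, …, Y_m be n×n complex matrices, each symmetric (Y_αᵀ = Y_α), and let X_1, …, X_m be n×n real diagonal matrices such that Y_α* Y_β + Y_β* Y_α = 2 δ_{αβ} X_α for all α, β. Set D_F := Σ_{β=1}^m X_β, write x_α^i for the i-th diagonal entry of X_α, y_F^i for the i-th diagonal entry of D_F, and y_B^α := trace(X_α). Assume additionally that D_F Y_α = Y_α D_F for every α, and let c : {1,…,n} → ℝ be arbitrary. Then for every α and all indices i, j: the (i,j) entry of 4 Σ_{β=1}^m Y_β Y_α* Y_β plus (Y_α)_{ij} · (2 y_B^α + y_F^i + y_F^j − c_i − c_j) equals (Y_α)_{ij} · (4 x_α^i + 4 x_α^j + 2 y_B^α − y_F^i − y_F^j − c_i − c_j). In particular, the Yukawa finiteness condition in standard form holds for Y_α if and only if the quasi-linear condition (Y_α)_{ij} (4 x_α^i + 4 x_α^j + 2 y_B^α − y_F^i − y_F^j − c_i − c_j) = 0 holds for all i, j. -/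
open Matrix
open scoped BigOperators

/-- With diagonalized `x`, i.e. `Yαᴴ Yβ + Yβᴴ Yα = 2 δ_{αβ} Xα` with `Xα` real
diagonal, and with `D_F := Σ_β Xβ` commuting with every `Yα`, the standard form
of the Yukawa finiteness condition turns, entrywise, into the quasi-linear
expression; in particular the two conditions are equivalent. -/
theorem stmt_10 (n m : ℕ) (hn : 1 ≤ n) (hm : 1 ≤ m)
    (Y : Fin m → Matrix (Fin n) (Fin n) ℂ)
    (x : Fin m → Fin n → ℝ)
    (hsym : ∀ α, (Y α)ᵀ = Y α)
    (hdiag : ∀ α β, (Y α)ᴴ * Y β + (Y β)ᴴ * Y α =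
      if α = β then (2 : ℂ) • Matrix.diagonal (fun i => (x α i : ℂ)) else 0)
    (hcomm : ∀ α,
      (∑ β, Matrix.diagonal (fun i => (x β i : ℂ))) * Y α
        = Y α * (∑ β, Matrix.diagonal (fun i => (x β i : ℂ))))
    (c : Fin n → ℝ) :
    (∀ α, ∀ i j,
      ((4 : ℂ) • ∑ β, Y β * (Y α)ᴴ * Y β) i j
        + Y α i j * ((2 * (∑ k, x α k) + (∑ β, x β i) + (∑ β, x β j)
            - c i - c j : ℝ) : ℂ)
      = Y α i j * ((4 * x α i + 4 * x α j + 2 * (∑ k, x α k)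
            - (∑ β, x β i) - (∑ β, x β j) - c i - c j : ℝ) : ℂ)) ∧
    (∀ α,
      (∀ i j, ((4 : ℂ) • ∑ β, Y β * (Y α)ᴴ * Y β) i j
        + Y α i j * ((2 * (∑ k, x α k) + (∑ β, x β i) + (∑ β, x β j)
            - c i - c j : ℝ) : ℂ) = 0) ↔
      (∀ i j, Y α i j * ((4 * x α i + 4 * x α j + 2 * (∑ k, x α k)
            - (∑ β, x β i) - (∑ β, x β j) - c i - c j : ℝ) : ℂ) = 0)) := by

  set Xm : Fin m → Matrix (Fin n) (Fin n) ℂ := fun β => Matrix.diagonal (fun i => (x β i : ℂ)) with hXm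
  set D : Matrix (Fin n) (Fin n) ℂ := ∑ β, Xm β with hD
  have hsymH : ∀ α, ((Y α)ᴴ)ᵀ = (Y α)ᴴ := by
    intro α
    ext i j
    have h := congrFun (congrFun (hsym α) i) j
    simp only [Matrix.transpose_apply, Matrix.conjTranspose_apply] at h ⊢
    rw [h]
  have hYY : ∀ β, (Y β)ᴴ * Y β = Xm β := by
    intro β
    have h2 : (2:ℂ) • ((Y β)ᴴ * Y β) = (2:ℂ) • Xm β := by
      rw [two_smul]; simpa using hdiag β β
    exact smul_right_injective _ two_ne_zero h2
  have hYYH : ∀ β, Y β * (Y β)ᴴ = Xm β := by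
    intro β
    have := congrArg Matrix.transpose (hYY β)
    simpa [transpose_mul, hsym, hsymH, hXm] using this
  have hT : ∀ α β, Y β * (Y α)ᴴ + Y α * (Y β)ᴴ =
      if α = β then (2:ℂ) • Xm α else 0 := by
    intro α β
    have := congrArg Matrix.transpose (hdiag α β)
    simp only [transpose_add, transpose_mul, hsym, hsymH] at this
    rw [this]
    split_ifs <;> simp [hXm]
  -- form A : S = 2 • (Y α * Xm α) - D * Y α
  have hA : ∀ α, ∑ β, Y β * (Y α)ᴴ * Y β = (2:ℂ) • (Y α * Xm α) - D * Y α := by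
    intro α
    have hterm : ∀ β, Y β * (Y α)ᴴ * Y β =
        (if α = β then (2:ℂ) • (Y α * Xm α) else 0) - Xm β * Y α := by
      intro β
      have h2 : (Y α)ᴴ * Y β = (if α = β then (2:ℂ) • Xm α else 0) - (Y β)ᴴ * Y α :=
        eq_sub_of_add_eq (hdiag α β)
      rw [mul_assoc, h2, mul_sub, ← mul_assoc, hYYH β]
      congr 1
      split_ifs with h
      · subst h; rw [Matrix.mul_smul]
      · simp
    rw [Finset.sum_congr rfl (fun β _ => hterm β), Finset.sum_sub_distrib,
      Finset.sum_ite_eq Finset.univ α, if_pos (Finset.mem_univ α), ← Finset.sum_mul, ← hD]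
  -- form B : S = 2 • (Xm α * Y α) - Y α * D
  have hB : ∀ α, ∑ β, Y β * (Y α)ᴴ * Y β = (2:ℂ) • (Xm α * Y α) - Y α * D := by
    intro α
    have hterm : ∀ β, Y β * (Y α)ᴴ * Y β =
        (if α = β then (2:ℂ) • (Xm α * Y α) else 0) - Y α * Xm β := by
      intro β
      have h2 : Y β * (Y α)ᴴ = (if α = β then (2:ℂ) • Xm α else 0) - Y α * (Y β)ᴴ :=
        eq_sub_of_add_eq (hT α β)
      rw [h2, sub_mul, mul_assoc, hYY β]
      congr 1
      split_ifs with h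
      · subst h; rw [Matrix.smul_mul]
      · simp
    rw [Finset.sum_congr rfl (fun β _ => hterm β), Finset.sum_sub_distrib,
      Finset.sum_ite_eq Finset.univ α, if_pos (Finset.mem_univ α), ← Finset.mul_sum, ← hD]
  have hDapp : ∀ i j, D i j = if i = j then ((∑ β, x β i : ℝ) : ℂ) else 0 := by
    intro i j
    rw [hD]
    simp only [Matrix.sum_apply, hXm, Matrix.diagonal_apply]
    push_cast
    split_ifs <;> simp
  have key : ∀ α i j, ((4 : ℂ) • ∑ β, Y β * (Y α)ᴴ * Y β) i j
      = Y α i j * (((4 * x α i + 4 * x α j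
          - 2 * (∑ β, x β i) - 2 * (∑ β, x β j) : ℝ)) : ℂ) := by
    intro α i j
    have h4 : ((4 : ℂ) • ∑ β, Y β * (Y α)ᴴ * Y β)
        = (2:ℂ) • ((2:ℂ) • (Y α * Xm α) - D * Y α)
          + (2:ℂ) • ((2:ℂ) • (Xm α * Y α) - Y α * D) := by
      rw [← hA α, ← hB α, ← smul_add, ← two_smul ℂ (∑ β, Y β * (Y α)ᴴ * Y β),
        smul_smul]
      norm_num
    rw [h4]
    have hYD : (Y α * D) i j = Y α i j * ((∑ β, x β j : ℝ) : ℂ) := by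
      rw [Matrix.mul_apply]
      rw [Finset.sum_eq_single j]
      · rw [hDapp j j, if_pos rfl]
      · intro b _ hb; rw [hDapp b j, if_neg hb, mul_zero]
      · intro h; exact absurd (Finset.mem_univ j) h
    have hDY : (D * Y α) i j = ((∑ β, x β i : ℝ) : ℂ) * Y α i j := by
      rw [Matrix.mul_apply]
      rw [Finset.sum_eq_single i]
      · rw [hDapp i i, if_pos rfl]
      · intro b _ hb; rw [hDapp i b, if_neg (fun h => hb h.symm), zero_mul]
      · intro h; exact absurd (Finset.mem_univ i) h
    simp only [Matrix.add_apply, Matrix.smul_apply, Matrix.sub_apply,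
      Matrix.mul_diagonal, Matrix.diagonal_mul, hXm, hYD, hDY, smul_eq_mul]
    push_cast
    ring
  have main : ∀ α, ∀ i j,
      ((4 : ℂ) • ∑ β, Y β * (Y α)ᴴ * Y β) i j
        + Y α i j * ((2 * (∑ k, x α k) + (∑ β, x β i) + (∑ β, x β j)
            - c i - c j : ℝ) : ℂ)
      = Y α i j * ((4 * x α i + 4 * x α j + 2 * (∑ k, x α k)
            - (∑ β, x β i) - (∑ β, x β j) - c i - c j : ℝ) : ℂ) := by
    intro α i j
    rw [key α i j]
    push_cast
    ring
  refine ⟨main, fun α => ⟨fun h i j => by rw [← main α i j]; exact h i j,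
    fun h i j => by rw [main α i j]; exact h i j⟩⟩
end
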